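/- arXiv:1408.5274 — 8 statements merged into one kernel-verified Lean document; each statement's English description precedes it below -/
import Mathlib

section
/- A subset P of ℕ^n containing 0 is 1-invariant if and only if the invariant game H whose allowed moves from every position p are exactly the nonzero elements of ℕ^n \ (P − P) that are componentwise ≤ p has P as its set of P-positions. -/
/-- `P` is the set of P-positions of the game `G` (stability + absorbing). -/
def IsPPositions {n : ℕ} (G : (Fin n → ℕ) → Set (Fin n → ℕ))
    (P : Set (Fin n → ℕ)) : Prop :=
  (∀ p ∈ P, ∀ m ∈ G p, p - m ∉ P) ∧ (∀ q, q ∉ P → ∃ m ∈ G q, q - m ∈ P)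

/-- The difference set P − P (only differences staying in ℕ^n). -/
def DiffSet {n : ℕ} (P : Set (Fin n → ℕ)) : Set (Fin n → ℕ) :=
  {m | ∃ x ∈ P, ∃ y ∈ P, y ≤ x ∧ m = x - y}

lemma sub_sub_self' {n : ℕ} (x y : Fin n → ℕ) (h : y ≤ x) : x - (x - y) = y := by
  funext i; exact Nat.sub_sub_self (h i)

/-- A subset `P` of ℕ^n containing 0 is 1-invariant iff the invariant game
whose moves are the nonzero elements of ℕ^n \ (P − P) has `P` as its set of
P-positions. -/
theorem one_invariant_iff_complement_diff_game (n : ℕ)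
    (P : Set (Fin n → ℕ)) (h0 : (0 : Fin n → ℕ) ∈ P) :
    (∃ I : Set (Fin n → ℕ), (0 : Fin n → ℕ) ∉ I ∧
        IsPPositions (fun p => I ∩ {m | m ≤ p}) P) ↔
      IsPPositions (fun p => {m | m ≠ 0 ∧ m ∉ DiffSet P ∧ m ≤ p}) P := by
  constructor
  · rintro ⟨I, hI0, ⟨hstab, habs⟩⟩
    constructor
    · rintro p hp m ⟨hm0, hmD, hmp⟩ hpm
      exact hmD ⟨p, hp, p - m, hpm, fun i => Nat.sub_le _ _,
        (sub_sub_self' p m hmp).symm⟩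
    · intro q hq
      obtain ⟨m, ⟨hmI, hmq⟩, hqm⟩ := habs q hq
      refine ⟨m, ⟨?_, ?_, hmq⟩, hqm⟩
      · rintro rfl; exact hI0 hmI
      · rintro ⟨x, hx, y, hy, hyx, rfl⟩
        exact hstab x hx (x - y) ⟨hmI, fun i => Nat.sub_le _ _⟩
          (by rw [sub_sub_self' x y hyx]; exact hy)
  · intro h
    refine ⟨{m | m ≠ 0 ∧ m ∉ DiffSet P}, ?_, ?_⟩
    · simp
    · obtain ⟨h1, h2⟩ := h
      refine ⟨fun p hp m hm => h1 p hp m ⟨hm.1.1, hm.1.2, hm.2⟩, fun q hq => ?_⟩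
      obtain ⟨m, ⟨a, b, c⟩, d⟩ := h2 q hq
      exact ⟨m, ⟨⟨a, b⟩, c⟩, d⟩
end

section
/- If a move m can be adjoined to an impartial acyclic game G without changing the set of P-positions, then m ∉ P(G) − P(G); conversely, adjoining any move m with m ∉ P(G) − P(G) to G (allowed from any position p with m ≤ p) leaves the set of P-positions unchanged. -/
/-- A (nonzero) move `m` can be adjoined to an acyclic game `G` without changing
the set of P-positions if and only if `m ∉ P(G) − P(G)`. -/
theorem adjoin_move_iff_not_mem_diffSet (n : ℕ)
    (G : (Fin n → ℕ) → Set (Fin n → ℕ))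
    (hG : ∀ p, ∀ m' ∈ G p, m' ≠ 0 ∧ m' ≤ p)
    (P : Set (Fin n → ℕ)) (hP : IsPPositions G P)
    (m : Fin n → ℕ) (hm : m ≠ 0) :
    IsPPositions (fun p => G p ∪ ({m} ∩ {m' | m' ≤ p})) P ↔ m ∉ DiffSet P := by
  constructor
  · rintro ⟨h1, _⟩ ⟨x, hx, y, hy, hyx, rfl⟩
    have hmx : x - y ≤ x := by
      intro i; exact Nat.sub_le _ _
    have := h1 x hx (x - y) (Or.inr ⟨rfl, hmx⟩)
    apply this
    have : x - (x - y) = y := by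
      funext i; exact Nat.sub_sub_self (hyx i)
    rwa [this]
  · intro hnd
    constructor
    · intro p hp mv hmv
      rcases hmv with hmv | ⟨hmv1, hmv2⟩
      · exact hP.1 p hp mv hmv
      · simp only [Set.mem_singleton_iff] at hmv1
        simp only [Set.mem_setOf_eq] at hmv2
        rw [hmv1] at hmv2 ⊢
        intro hpm
        apply hnd
        refine ⟨p, hp, p - m, hpm, (fun i => Nat.sub_le _ _), ?_⟩
        funext i; exact (Nat.sub_sub_self (hmv2 i)).symm
    · intro q hq
      obtain ⟨mv, hmv, h⟩ := hP.2 q hq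
      exact ⟨mv, Or.inl hmv, h⟩
end

section
/- Let w = v^ω be a periodic binary word over {1,2} with |v|₁ = |v|₂ = ℓ/2 and |v| = ℓ, and let P_w ⊆ ℕ² be its associated set of positions (including (0,0) and symmetric pairs). Then (P_w − P_w) ∩ ℕ² = ((P_w ∩ [0,2ℓ]² − P_w ∩ [0,ℓ]²) ∩ ℕ²) + {k·(ℓ,ℓ) : k ∈ ℕ}. -/
/-- `A` enumerates (for indices `m ≥ 1`, in increasing order) the positions
`i ≥ 1` where the infinite word `w` carries the letter `a`. -/
def EnumOcc (w : ℕ → ℕ) (a : ℕ) (A : ℕ → ℕ) : Prop :=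
  (∀ m n, 1 ≤ m → m < n → A m < A n) ∧
  (∀ m, 1 ≤ m → 1 ≤ A m ∧ w (A m) = a) ∧
  (∀ i, 1 ≤ i → w i = a → ∃ m, 1 ≤ m ∧ A m = i)

/-- The set of positions associated with a binary word. -/
def Pword (A B : ℕ → ℕ) : Set (ℕ × ℕ) :=
  {(0, 0)} ∪ {p | ∃ m, 1 ≤ m ∧ p = (A m, B m)} ∪ {p | ∃ m, 1 ≤ m ∧ p = (B m, A m)}

/-- The set of componentwise differences X − Y that stay in ℕ². -/
def DiffOf (X Y : Set (ℕ × ℕ)) : Set (ℕ × ℕ) :=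
  {d | ∃ x ∈ X, ∃ y ∈ Y, y.1 ≤ x.1 ∧ y.2 ≤ x.2 ∧ d = (x.1 - y.1, x.2 - y.2)}

def PWOcc (w : ℕ → ℕ) (a : ℕ) (n : ℕ) : Finset ℕ := (Finset.Icc 1 n).filter (fun i => w i = a)

lemma enum_mono {w a A} (hA : EnumOcc w a A) {m n : ℕ} (hm : 1 ≤ m) (h : m ≤ n) : A m ≤ A n := by
  rcases eq_or_lt_of_le h with rfl | h
  · exact le_rfl
  · exact (hA.1 m n hm h).le

lemma enum_count {w a A} (hA : EnumOcc w a A) {m : ℕ} (hm : 1 ≤ m) :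
    (PWOcc w a (A m)).card = m := by
  have himg : PWOcc w a (A m) = (Finset.Icc 1 m).image A := by
    ext i
    simp only [PWOcc, Finset.mem_filter, Finset.mem_Icc, Finset.mem_image]
    constructor
    · rintro ⟨⟨hi1, hi2⟩, hwa⟩
      obtain ⟨m', hm', rfl⟩ := hA.2.2 i hi1 hwa
      refine ⟨m', ⟨hm', ?_⟩, rfl⟩
      by_contra h
      exact absurd hi2 (not_le.mpr (hA.1 m m' hm (by omega)))
    · rintro ⟨m', ⟨h1, h2⟩, rfl⟩
      exact ⟨⟨(hA.2.1 m' h1).1, enum_mono hA h1 h2⟩, (hA.2.1 m' h1).2⟩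
  rw [himg, Finset.card_image_of_injOn, Nat.card_Icc]
  · omega
  · intro x hx y hy hxy
    simp only [Finset.coe_Icc, Set.mem_Icc] at hx hy
    by_contra hne
    rcases lt_or_gt_of_ne hne with h | h
    · exact absurd hxy (hA.1 x y hx.1 h).ne
    · exact absurd hxy.symm (hA.1 y x hy.1 h).ne

lemma count_shift {w a : ℕ → ℕ} {ℓ : ℕ} : True := trivial

lemma occ_shift {w : ℕ → ℕ} {a ℓ : ℕ} (hper : ∀ i, 1 ≤ i → w (i + ℓ) = w i) (n : ℕ) :
    (PWOcc w a (n + ℓ)).card = (PWOcc w a n).card + (PWOcc w a ℓ).card := by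
  have : PWOcc w a (n + ℓ) = (PWOcc w a ℓ) ∪ (PWOcc w a n).image (· + ℓ) := by
    ext i
    simp only [PWOcc, Finset.mem_union, Finset.mem_filter, Finset.mem_Icc, Finset.mem_image]
    constructor
    · rintro ⟨⟨h1, h2⟩, hwa⟩
      by_cases h : i ≤ ℓ
      · exact Or.inl ⟨⟨h1, h⟩, hwa⟩
      · refine Or.inr ⟨i - ℓ, ⟨⟨by omega, by omega⟩, ?_⟩, by omega⟩
        have h3 : i - ℓ + ℓ = i := by omega
        rw [← hper (i - ℓ) (by omega), h3]; exact hwa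
    · rintro (⟨⟨h1, h2⟩, hwa⟩ | ⟨j, ⟨⟨hj1, hj2⟩, hwa⟩, rfl⟩)
      · exact ⟨⟨h1, by omega⟩, hwa⟩
      · exact ⟨⟨by omega, by omega⟩, by rw [hper j hj1]; exact hwa⟩
  rw [this, Finset.card_union_of_disjoint, Finset.card_image_of_injective _ (add_left_injective ℓ)]
  · omega
  · rw [Finset.disjoint_left]
    rintro i hi h2
    simp only [PWOcc, Finset.mem_filter, Finset.mem_Icc, Finset.mem_image] at hi h2
    obtain ⟨j, ⟨⟨hj1, _⟩, _⟩, rfl⟩ := h2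
    omega

/-- shift lemma -/
lemma enum_shift {w A : ℕ → ℕ} {a ℓ c : ℕ} (hA : EnumOcc w a A)
    (hper : ∀ i, 1 ≤ i → w (i + ℓ) = w i) (hc : (PWOcc w a ℓ).card = c)
    {m : ℕ} (hm : 1 ≤ m) : A (m + c) = A m + ℓ := by
  have h1 : 1 ≤ A m + ℓ := by have := (hA.2.1 m hm).1; omega
  have h2 : w (A m + ℓ) = a := by rw [hper (A m) (hA.2.1 m hm).1]; exact (hA.2.1 m hm).2
  obtain ⟨m', hm', hAm'⟩ := hA.2.2 _ h1 h2
  have hcnt : (PWOcc w a (A m')).card = m' := enum_count hA hm'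
  rw [hAm', occ_shift hper, enum_count hA hm, hc] at hcnt
  rw [← hAm', hcnt]

lemma enum_bound {w A : ℕ → ℕ} {a ℓ c : ℕ} (hA : EnumOcc w a A)
    (hc : (PWOcc w a ℓ).card = c) {m : ℕ} (hm : 1 ≤ m) (hmc : m ≤ c) : A m ≤ ℓ := by
  by_contra h
  push_neg at h
  have hsub : insert (A m) (PWOcc w a ℓ) ⊆ PWOcc w a (A m) := by
    intro i hi
    simp only [Finset.mem_insert, PWOcc, Finset.mem_filter, Finset.mem_Icc] at hi ⊢
    rcases hi with rfl | ⟨⟨h1, h2⟩, hwa⟩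
    · exact ⟨⟨(hA.2.1 m hm).1, le_rfl⟩, (hA.2.1 m hm).2⟩
    · exact ⟨⟨h1, by omega⟩, hwa⟩
  have hnotmem : A m ∉ PWOcc w a ℓ := by
    simp only [PWOcc, Finset.mem_filter, Finset.mem_Icc]
    rintro ⟨⟨_, h2⟩, _⟩
    omega
  have := Finset.card_le_card hsub
  rw [Finset.card_insert_of_notMem hnotmem, hc, enum_count hA hm] at this
  omega
/-- A sequence with period-shift and initial-block bounds. -/
def PWGood (F : ℕ → ℕ) (ℓ c : ℕ) : Prop :=
  (∀ m, 1 ≤ m → F (m + c) = F m + ℓ) ∧ (∀ m, 1 ≤ m → m ≤ c → 1 ≤ F m ∧ F m ≤ ℓ)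

lemma PWGood.iter {F : ℕ → ℕ} {ℓ c : ℕ} (g : PWGood F ℓ c) {m : ℕ} (hm : 1 ≤ m) (k : ℕ) :
    F (m + k * c) = F m + k * ℓ := by
  induction k with
  | zero => simp
  | succ k ih =>
    have h1 : m + (k + 1) * c = (m + k * c) + c := by ring
    rw [h1, g.1 _ (by omega), ih]
    ring

lemma mem_Pword {A B : ℕ → ℕ} {p : ℕ × ℕ} :
    p ∈ Pword A B ↔ (p = (0, 0) ∨ (∃ m, 1 ≤ m ∧ p = (A m, B m))) ∨
      (∃ m, 1 ≤ m ∧ p = (B m, A m)) := Iff.rfl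

lemma reduce_case {P : Set (ℕ × ℕ)} {A₁ B₁ A₂ B₂ : ℕ → ℕ} {ℓ c : ℕ} (hc : 1 ≤ c)
    (g1 : PWGood A₁ ℓ c) (g2 : PWGood B₁ ℓ c) (g3 : PWGood A₂ ℓ c) (g4 : PWGood B₂ ℓ c)
    (hP1 : ∀ j, 1 ≤ j → (A₁ j, B₁ j) ∈ P) (hP2 : ∀ j, 1 ≤ j → (A₂ j, B₂ j) ∈ P)
    {m n : ℕ} (hm : 1 ≤ m) (hn : 1 ≤ n) (hle1 : A₂ n ≤ A₁ m) (hle2 : B₂ n ≤ B₁ m) :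
    ∃ d ∈ DiffOf (P ∩ {p : ℕ × ℕ | p.1 ≤ 2 * ℓ ∧ p.2 ≤ 2 * ℓ})
                 (P ∩ {p : ℕ × ℕ | p.1 ≤ ℓ ∧ p.2 ≤ ℓ}),
      ∃ k : ℕ, (A₁ m - A₂ n, B₁ m - B₂ n) = (d.1 + k * ℓ, d.2 + k * ℓ) := by
  obtain ⟨r, s, hr1, hrc, hmeq⟩ : ∃ r s, 1 ≤ r ∧ r ≤ c ∧ m = r + s * c := by
    refine ⟨(m - 1) % c + 1, (m - 1) / c, by omega,
      by have := Nat.mod_lt (m - 1) hc; omega, ?_⟩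
    have h1 := Nat.div_add_mod (m - 1) c
    have h2 : c * ((m - 1) / c) = ((m - 1) / c) * c := Nat.mul_comm _ _
    omega
  obtain ⟨u, t, hu1, huc, hneq⟩ : ∃ u t, 1 ≤ u ∧ u ≤ c ∧ n = u + t * c := by
    refine ⟨(n - 1) % c + 1, (n - 1) / c, by omega,
      by have := Nat.mod_lt (n - 1) hc; omega, ?_⟩
    have h1 := Nat.div_add_mod (n - 1) c
    have h2 : c * ((n - 1) / c) = ((n - 1) / c) * c := Nat.mul_comm _ _
    omega
  have e1 : A₁ m = A₁ r + s * ℓ := by rw [hmeq]; exact g1.iter hr1 s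
  have e2 : B₁ m = B₁ r + s * ℓ := by rw [hmeq]; exact g2.iter hr1 s
  have e3 : A₂ n = A₂ u + t * ℓ := by rw [hneq]; exact g3.iter hu1 t
  have e4 : B₂ n = B₂ u + t * ℓ := by rw [hneq]; exact g4.iter hu1 t
  obtain ⟨bA1a, bA1b⟩ := g1.2 r hr1 hrc
  obtain ⟨bB1a, bB1b⟩ := g2.2 r hr1 hrc
  obtain ⟨bA2a, bA2b⟩ := g3.2 u hu1 huc
  obtain ⟨bB2a, bB2b⟩ := g4.2 u hu1 huc
  have hts : t ≤ s := by
    by_contra h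
    push_neg at h
    have h1 : s + 1 ≤ t := h
    have h2 : (s + 1) * ℓ ≤ t * ℓ := Nat.mul_le_mul_right ℓ h1
    have h3 : s * ℓ + ℓ ≤ t * ℓ := by rw [add_mul, one_mul] at h2; exact h2
    omega
  rcases Nat.eq_or_lt_of_le hts with heq | hlt
  · -- t = s : no extra period needed
    have hmul : t * ℓ = s * ℓ := by rw [heq]
    refine ⟨(A₁ r - A₂ u, B₁ r - B₂ u),
      ⟨(A₁ r, B₁ r), ⟨hP1 r hr1, by omega, by omega⟩,
       (A₂ u, B₂ u), ⟨hP2 u hu1, bA2b, bB2b⟩, by omega, by omega, rfl⟩,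
      0, ?_⟩
    simp only [Prod.mk.injEq]
    omega
  · obtain ⟨k, hk⟩ : ∃ k, s = t + 1 + k := ⟨s - t - 1, by omega⟩
    have hmul : s * ℓ = t * ℓ + ℓ + k * ℓ := by rw [hk]; ring
    have hx : (A₁ r + ℓ, B₁ r + ℓ) ∈ P := by
      have h := hP1 (r + c) (by omega)
      rwa [g1.1 r hr1, g2.1 r hr1] at h
    refine ⟨(A₁ r + ℓ - A₂ u, B₁ r + ℓ - B₂ u),
      ⟨(A₁ r + ℓ, B₁ r + ℓ), ⟨hx, by omega, by omega⟩,
       (A₂ u, B₂ u), ⟨hP2 u hu1, bA2b, bB2b⟩, by omega, by omega, rfl⟩,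
      k, ?_⟩
    simp only [Prod.mk.injEq]
    omega

lemma reduce_zero {P : Set (ℕ × ℕ)} {A₁ B₁ : ℕ → ℕ} {ℓ c : ℕ} (hc : 1 ≤ c)
    (g1 : PWGood A₁ ℓ c) (g2 : PWGood B₁ ℓ c)
    (hP1 : ∀ j, 1 ≤ j → (A₁ j, B₁ j) ∈ P) (h0 : (0, 0) ∈ P)
    {m : ℕ} (hm : 1 ≤ m) :
    ∃ d ∈ DiffOf (P ∩ {p : ℕ × ℕ | p.1 ≤ 2 * ℓ ∧ p.2 ≤ 2 * ℓ})
                 (P ∩ {p : ℕ × ℕ | p.1 ≤ ℓ ∧ p.2 ≤ ℓ}),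
      ∃ k : ℕ, ((A₁ m : ℕ), (B₁ m : ℕ)) = (d.1 + k * ℓ, d.2 + k * ℓ) := by
  obtain ⟨r, s, hr1, hrc, hmeq⟩ : ∃ r s, 1 ≤ r ∧ r ≤ c ∧ m = r + s * c := by
    refine ⟨(m - 1) % c + 1, (m - 1) / c, by omega,
      by have := Nat.mod_lt (m - 1) hc; omega, ?_⟩
    have h1 := Nat.div_add_mod (m - 1) c
    have h2 : c * ((m - 1) / c) = ((m - 1) / c) * c := Nat.mul_comm _ _
    omega
  have e1 : A₁ m = A₁ r + s * ℓ := by rw [hmeq]; exact g1.iter hr1 s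
  have e2 : B₁ m = B₁ r + s * ℓ := by rw [hmeq]; exact g2.iter hr1 s
  obtain ⟨bA1a, bA1b⟩ := g1.2 r hr1 hrc
  obtain ⟨bB1a, bB1b⟩ := g2.2 r hr1 hrc
  refine ⟨(A₁ r - 0, B₁ r - 0),
    ⟨(A₁ r, B₁ r), ⟨hP1 r hr1, by omega, by omega⟩,
     (0, 0), ⟨h0, by omega, by omega⟩, by omega, by omega, rfl⟩,
    s, ?_⟩
  simp only [Prod.mk.injEq]
  omega

/-- For a periodic binary word with balanced period of length ℓ,
(P_w − P_w) ∩ ℕ² = ((P_w ∩ [0,2ℓ]² − P_w ∩ [0,ℓ]²) ∩ ℕ²) + ℕ·(ℓ,ℓ). -/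
theorem periodic_word_diffSet (w : ℕ → ℕ) (ℓ : ℕ) (hℓ : 1 ≤ ℓ)
    (hbin : ∀ i, 1 ≤ i → w i = 1 ∨ w i = 2)
    (hper : ∀ i, 1 ≤ i → w (i + ℓ) = w i)
    (hcount : ((Finset.Icc 1 ℓ).filter (fun i => w i = 1)).card =
              ((Finset.Icc 1 ℓ).filter (fun i => w i = 2)).card)
    (A B : ℕ → ℕ) (hA : EnumOcc w 1 A) (hB : EnumOcc w 2 B) :
    DiffOf (Pword A B) (Pword A B) =
      {q | ∃ d ∈ DiffOf (Pword A B ∩ {p | p.1 ≤ 2 * ℓ ∧ p.2 ≤ 2 * ℓ})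
                        (Pword A B ∩ {p | p.1 ≤ ℓ ∧ p.2 ≤ ℓ}),
           ∃ k : ℕ, q = (d.1 + k * ℓ, d.2 + k * ℓ)} := by
  classical
  set c := ((Finset.Icc 1 ℓ).filter (fun i => w i = 1)).card with hcdef
  have hcA : (PWOcc w 1 ℓ).card = c := hcdef.symm
  have hcB : (PWOcc w 2 ℓ).card = c := hcount.symm
  have hsum : c + c = ℓ := by
    have hunion : (Finset.Icc 1 ℓ).filter (fun i => w i = 1) ∪
        (Finset.Icc 1 ℓ).filter (fun i => w i = 2) = Finset.Icc 1 ℓ := by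
      ext i
      simp only [Finset.mem_union, Finset.mem_filter, Finset.mem_Icc]
      constructor
      · rintro (⟨h, _⟩ | ⟨h, _⟩) <;> exact h
      · intro h
        rcases hbin i h.1 with h1 | h1
        · exact Or.inl ⟨h, h1⟩
        · exact Or.inr ⟨h, h1⟩
    have hdisj : Disjoint ((Finset.Icc 1 ℓ).filter (fun i => w i = 1))
        ((Finset.Icc 1 ℓ).filter (fun i => w i = 2)) := by
      rw [Finset.disjoint_left]
      intro i h1 h2
      simp only [Finset.mem_filter] at h1 h2
      omega
    have := Finset.card_union_of_disjoint hdisj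
    rw [hunion, Nat.card_Icc] at this
    omega
  have hc1 : 1 ≤ c := by omega
  have gA : PWGood A ℓ c :=
    ⟨fun m hm => enum_shift hA hper hcA hm,
     fun m h1 h2 => ⟨(hA.2.1 m h1).1, enum_bound hA hcA h1 h2⟩⟩
  have gB : PWGood B ℓ c :=
    ⟨fun m hm => enum_shift hB hper hcB hm,
     fun m h1 h2 => ⟨(hB.2.1 m h1).1, enum_bound hB hcB h1 h2⟩⟩
  have hPAB : ∀ j, 1 ≤ j → (A j, B j) ∈ Pword A B :=
    fun j hj => mem_Pword.mpr (Or.inl (Or.inr ⟨j, hj, rfl⟩))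
  have hPBA : ∀ j, 1 ≤ j → (B j, A j) ∈ Pword A B :=
    fun j hj => mem_Pword.mpr (Or.inr ⟨j, hj, rfl⟩)
  have hP0 : ((0 : ℕ), (0 : ℕ)) ∈ Pword A B := mem_Pword.mpr (Or.inl (Or.inl rfl))
  ext q
  simp only [Set.mem_setOf_eq]
  constructor
  · rintro ⟨x, hx, y, hy, hle1, hle2, rfl⟩
    rcases mem_Pword.mp hy with (rfl | ⟨n, hn, rfl⟩) | ⟨n, hn, rfl⟩
    · -- y = (0,0)
      rcases mem_Pword.mp hx with (rfl | ⟨m, hm, rfl⟩) | ⟨m, hm, rfl⟩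
      · exact ⟨(0, 0), ⟨(0, 0), ⟨hP0, by omega, by omega⟩, (0, 0),
          ⟨hP0, by omega, by omega⟩, le_rfl, le_rfl, rfl⟩, 0, by simp⟩
      · simpa using reduce_zero hc1 gA gB hPAB hP0 hm
      · simpa using reduce_zero hc1 gB gA hPBA hP0 hm
    · -- y = (A n, B n)
      rcases mem_Pword.mp hx with (rfl | ⟨m, hm, rfl⟩) | ⟨m, hm, rfl⟩
      · exact absurd hle1 (by simp; have := (hA.2.1 n hn).1; omega)
      · exact reduce_case hc1 gA gB gA gB hPAB hPAB hm hn hle1 hle2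
      · exact reduce_case hc1 gB gA gA gB hPBA hPAB hm hn hle1 hle2
    · -- y = (B n, A n)
      rcases mem_Pword.mp hx with (rfl | ⟨m, hm, rfl⟩) | ⟨m, hm, rfl⟩
      · exact absurd hle1 (by simp; have := (hB.2.1 n hn).1; omega)
      · exact reduce_case hc1 gA gB gB gA hPAB hPBA hm hn hle1 hle2
      · exact reduce_case hc1 gB gA gB gA hPBA hPBA hm hn hle1 hle2
  · rintro ⟨d, ⟨x, ⟨hxP, hxb⟩, ⟨y1, y2⟩, ⟨hyP, hyb⟩, hle1, hle2, rfl⟩, k, rfl⟩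
    rcases mem_Pword.mp hxP with (rfl | ⟨m, hm, rfl⟩) | ⟨m, hm, rfl⟩
    · -- x = (0,0), so y = (0,0)
      simp only at hle1 hle2
      have hy1 : y1 = 0 := by omega
      have hy2 : y2 = 0 := by omega
      subst hy1; subst hy2
      have eA : A (1 + k * c) = A 1 + k * ℓ := gA.iter le_rfl k
      have eB : B (1 + k * c) = B 1 + k * ℓ := gB.iter le_rfl k
      refine ⟨(A (1 + k * c), B (1 + k * c)), hPAB _ (by omega),
        (A 1, B 1), hPAB 1 le_rfl, by simp only; omega, by simp only; omega, ?_⟩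
      simp only [Prod.mk.injEq]
      omega
    · have eA : A (m + k * c) = A m + k * ℓ := gA.iter hm k
      have eB : B (m + k * c) = B m + k * ℓ := gB.iter hm k
      simp only at hle1 hle2
      refine ⟨(A (m + k * c), B (m + k * c)), hPAB _ (by omega),
        (y1, y2), hyP, by simp only; omega, by simp only; omega, ?_⟩
      simp only [Prod.mk.injEq]
      omega
    · have eA : A (m + k * c) = A m + k * ℓ := gA.iter hm k
      have eB : B (m + k * c) = B m + k * ℓ := gB.iter hm k
      simp only at hle1 hle2
      refine ⟨(B (m + k * c), A (m + k * c)), hPBA _ (by omega),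
        (y1, y2), hyP, by simp only; omega, by simp only; omega, ?_⟩
      simp only [Prod.mk.injEq]
      omega
end

section
/- Let w = v^ω be a periodic binary word over {1,2} with |v|₁ = |v|₂ = ℓ/2. The set P_w is 1-invariant if and only if for every position x ∈ [0,2ℓ]² \ P_w there exists p ∈ P_w with p ≤ x componentwise and x − p ∉ P_w − P_w. -/
/-- `P` is the set of P-positions of the two-pile game `G`. -/
def IsPPositions2 (G : ℕ × ℕ → Set (ℕ × ℕ)) (P : Set (ℕ × ℕ)) : Prop :=
  (∀ p ∈ P, ∀ m ∈ G p, (p.1 - m.1, p.2 - m.2) ∉ P) ∧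
  (∀ q, q ∉ P → ∃ m ∈ G q, (q.1 - m.1, q.2 - m.2) ∈ P)

section Aux

def cnt (w : ℕ → ℕ) (a N : ℕ) : ℕ := ((Finset.Icc 1 N).filter (fun i => w i = a)).card

lemma cnt_zero (w : ℕ → ℕ) (a : ℕ) : cnt w a 0 = 0 := by simp [cnt]

lemma cnt_succ (w : ℕ → ℕ) (a N : ℕ) :
    cnt w a (N + 1) = cnt w a N + (if w (N + 1) = a then 1 else 0) := by
  unfold cnt
  have h : Finset.Icc 1 (N + 1) = insert (N + 1) (Finset.Icc 1 N) := by
    ext i; simp [Finset.mem_Icc, Finset.mem_insert]; omega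
  rw [h, Finset.filter_insert]
  split
  · rw [Finset.card_insert_of_notMem (by simp [Finset.mem_filter, Finset.mem_Icc])]
  · simp

lemma cnt_mono (w : ℕ → ℕ) (a : ℕ) {M N : ℕ} (h : M ≤ N) : cnt w a M ≤ cnt w a N :=
  Finset.card_le_card (Finset.filter_subset_filter _ (Finset.Icc_subset_Icc_right h))

lemma cnt_period {w : ℕ → ℕ} {ℓ : ℕ} (hper : ∀ i, 1 ≤ i → w (i + ℓ) = w i) (a : ℕ) :
    ∀ N, cnt w a (N + ℓ) = cnt w a N + cnt w a ℓ := by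
  intro N
  induction N with
  | zero => simp [cnt_zero]
  | succ N ih =>
    have h1 : N + 1 + ℓ = (N + ℓ) + 1 := by omega
    have h2 : w (N + ℓ + 1) = w (N + 1) := by
      rw [show N + ℓ + 1 = (N + 1) + ℓ by omega]; exact hper (N + 1) (by omega)
    rw [h1, cnt_succ, ih, cnt_succ, h2]; ring

lemma cnt_mul {w : ℕ → ℕ} {ℓ : ℕ} (hper : ∀ i, 1 ≤ i → w (i + ℓ) = w i) (a j : ℕ) :
    cnt w a (j * ℓ) = j * cnt w a ℓ := by
  induction j with
  | zero => simp [cnt_zero]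
  | succ j ih => rw [show (j+1)*ℓ = j*ℓ + ℓ by ring, cnt_period hper, ih]; ring

variable {w : ℕ → ℕ} {a : ℕ} {A : ℕ → ℕ}

lemma enum_le (hA : EnumOcc w a A) {m n : ℕ} (hm : 1 ≤ m) (h : m ≤ n) : A m ≤ A n := by
  rcases eq_or_lt_of_le h with rfl | h
  · exact le_rfl
  · exact le_of_lt (hA.1 m n hm h)

lemma enum_inj (hA : EnumOcc w a A) {m n : ℕ} (hm : 1 ≤ m) (hn : 1 ≤ n) (h : A m = A n) :
    m = n := by
  rcases lt_trichotomy m n with h' | h' | h'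
  · exact absurd h (Nat.ne_of_lt (hA.1 m n hm h'))
  · exact h'
  · exact absurd h.symm (Nat.ne_of_lt (hA.1 n m hn h'))

lemma le_cnt (hA : EnumOcc w a A) {m : ℕ} (hm : 1 ≤ m) : m ≤ cnt w a (A m) := by
  have h := Finset.card_le_card_of_injOn A
    (s := Finset.Icc 1 m) (t := (Finset.Icc 1 (A m)).filter (fun i => w i = a))
    (fun n hn => by
      simp only [Finset.mem_coe, Finset.mem_Icc] at hn
      simp only [Finset.mem_coe, Finset.mem_filter, Finset.mem_Icc]
      exact ⟨⟨(hA.2.1 n hn.1).1, enum_le hA hn.1 hn.2⟩, (hA.2.1 n hn.1).2⟩)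
    (fun n hn n' hn' h => by
      simp only [Finset.coe_Icc, Set.mem_Icc] at hn hn'
      exact enum_inj hA hn.1 hn'.1 h)
  simpa [cnt, Nat.card_Icc] using h

lemma cnt_lt_of_lt (hA : EnumOcc w a A) {m N : ℕ} (hm : 1 ≤ m) (hN : N < A m) :
    cnt w a N < m := by
  have hsub : (Finset.Icc 1 N).filter (fun i => w i = a) ⊆ (Finset.Icc 1 (m-1)).image A := by
    intro i hi
    simp only [Finset.mem_filter, Finset.mem_Icc] at hi
    obtain ⟨n, hn1, hn2⟩ := hA.2.2 i hi.1.1 hi.2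
    refine Finset.mem_image.mpr ⟨n, ?_, hn2⟩
    simp only [Finset.mem_Icc]
    refine ⟨hn1, ?_⟩
    by_contra hc
    have : m ≤ n := by omega
    have := enum_le hA hm this
    omega
  have := Finset.card_le_card hsub
  have h2 := Finset.card_image_le (s := Finset.Icc 1 (m-1)) (f := A)
  simp only [Nat.card_Icc] at h2
  unfold cnt
  omega

lemma enum_le_iff (hA : EnumOcc w a A) {m N : ℕ} (hm : 1 ≤ m) :
    A m ≤ N ↔ m ≤ cnt w a N := by
  constructor
  · intro h; exact le_trans (le_cnt hA hm) (cnt_mono w a h)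
  · intro h; by_contra hc
    have := cnt_lt_of_lt hA hm (by omega : N < A m)
    omega

lemma cnt_enum (hA : EnumOcc w a A) {m : ℕ} (hm : 1 ≤ m) : cnt w a (A m) = m := by
  refine le_antisymm ?_ (le_cnt hA hm)
  by_contra hc
  have h1 : m + 1 ≤ cnt w a (A m) := by omega
  have h2 : A (m+1) ≤ A m := (enum_le_iff hA (by omega)).mpr h1
  have := hA.1 m (m+1) hm (by omega)
  omega

lemma enum_add_period (hA : EnumOcc w a A) {ℓ : ℕ} (hper : ∀ i, 1 ≤ i → w (i + ℓ) = w i)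
    {m : ℕ} (hm : 1 ≤ m) : A (m + cnt w a ℓ) = A m + ℓ := by
  have h1 : 1 ≤ A m := (hA.2.1 m hm).1
  have hw : w (A m + ℓ) = a := by rw [hper (A m) h1]; exact (hA.2.1 m hm).2
  obtain ⟨n, hn1, hn2⟩ := hA.2.2 (A m + ℓ) (by omega) hw
  have h3 : cnt w a (A n) = n := cnt_enum hA hn1
  rw [hn2, cnt_period hper, cnt_enum hA hm] at h3
  rw [← h3] at hn2
  exact hn2

lemma exists_block {k m : ℕ} (hk : 1 ≤ k) (hm : 1 ≤ m) :
    ∃ j, 1 ≤ j ∧ (j-1)*k < m ∧ m ≤ j*k := by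
  have h1 : (m-1)/k * k + (m-1) % k = m - 1 := Nat.div_add_mod' (m-1) k
  have h2 := Nat.mod_lt (m-1) (show 0 < k by omega)
  have h3 : ((m-1)/k + 1) * k = (m-1)/k * k + k := by ring
  refine ⟨(m-1)/k + 1, Nat.le_add_left 1 _, ?_, ?_⟩
  · show ((m-1)/k + 1 - 1)*k < m
    rw [Nat.add_sub_cancel]
    omega
  · omega

lemma enum_block (hA : EnumOcc w a A) {ℓ : ℕ} (hper : ∀ i, 1 ≤ i → w (i + ℓ) = w i)
    {m j : ℕ} (hm : 1 ≤ m) (h1 : (j-1) * cnt w a ℓ < m) (h2 : m ≤ j * cnt w a ℓ) :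
    (j-1)*ℓ < A m ∧ A m ≤ j*ℓ := by
  constructor
  · by_contra hc
    have := (enum_le_iff hA hm).mp (by omega : A m ≤ (j-1)*ℓ)
    rw [cnt_mul hper] at this
    omega
  · exact (enum_le_iff hA hm).mpr (by rw [cnt_mul hper]; omega)

end Aux

section PLayer

variable {w : ℕ → ℕ} {ℓ : ℕ} {A B : ℕ → ℕ}

lemma P_zero : (0,0) ∈ Pword A B := Or.inl (Or.inl rfl)

lemma P_AB {m : ℕ} (hm : 1 ≤ m) : (A m, B m) ∈ Pword A B := Or.inl (Or.inr ⟨m, hm, rfl⟩)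

lemma P_BA {m : ℕ} (hm : 1 ≤ m) : (B m, A m) ∈ Pword A B := Or.inr ⟨m, hm, rfl⟩

lemma P_cases {p : ℕ × ℕ} (h : p ∈ Pword A B) :
    p = (0,0) ∨ (∃ m, 1 ≤ m ∧ p = (A m, B m)) ∨ (∃ m, 1 ≤ m ∧ p = (B m, A m)) := by
  rcases h with (h|h)|h
  · exact Or.inl h
  · exact Or.inr (Or.inl h)
  · exact Or.inr (Or.inr h)

lemma A_ne_B (hA : EnumOcc w 1 A) (hB : EnumOcc w 2 B) {m n : ℕ}
    (hm : 1 ≤ m) (hn : 1 ≤ n) : A m ≠ B n := by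
  intro h
  have h1 := (hA.2.1 m hm).2
  have h2 := (hB.2.1 n hn).2
  rw [h] at h1
  omega

lemma count_sum (hℓ : 1 ≤ ℓ) (hbin : ∀ i, 1 ≤ i → w i = 1 ∨ w i = 2) :
    cnt w 1 ℓ + cnt w 2 ℓ = ℓ := by
  classical
  have h2 : (Finset.Icc 1 ℓ).filter (fun i => ¬ w i = 1) =
      (Finset.Icc 1 ℓ).filter (fun i => w i = 2) := by
    apply Finset.filter_congr
    intro i hi
    simp only [Finset.mem_Icc] at hi
    rcases hbin i hi.1 with h | h <;> simp [h]
  have h := Finset.card_filter_add_card_filter_not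
    (s := Finset.Icc 1 ℓ) (p := fun i => w i = 1)
  rw [h2] at h
  unfold cnt
  simpa [Nat.card_Icc] using h

/-- All the structural facts about a pair `(A m, B m)`. -/
lemma pair_all (hℓ : 1 ≤ ℓ) (hbin : ∀ i, 1 ≤ i → w i = 1 ∨ w i = 2)
    (hper : ∀ i, 1 ≤ i → w (i + ℓ) = w i)
    (hcount : cnt w 1 ℓ = cnt w 2 ℓ)
    (hA : EnumOcc w 1 A) (hB : EnumOcc w 2 B) {m : ℕ} (hm : 1 ≤ m) :
    1 ≤ A m ∧ 1 ≤ B m ∧ A m < B m + ℓ ∧ B m < A m + ℓ ∧ (A m ≤ ℓ ↔ B m ≤ ℓ) ∧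
      A (m + cnt w 1 ℓ) = A m + ℓ ∧ B (m + cnt w 1 ℓ) = B m + ℓ ∧
      (ℓ < A m → cnt w 1 ℓ < m ∧ 1 ≤ m - cnt w 1 ℓ ∧
        A m = A (m - cnt w 1 ℓ) + ℓ ∧ B m = B (m - cnt w 1 ℓ) + ℓ) := by
  have hsum := count_sum hℓ hbin
  set k := cnt w 1 ℓ with hk
  have hk2 : cnt w 2 ℓ = k := hcount.symm
  have hkpos : 1 ≤ k := by omega
  obtain ⟨j, hj1, hj2, hj3⟩ := exists_block hkpos hm
  obtain ⟨j', rfl⟩ : ∃ j', j = j' + 1 := ⟨j - 1, by omega⟩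
  have hAblk := enum_block hA hper hm (by rw [← hk]; exact hj2) (by rw [← hk]; exact hj3)
  have hBblk := enum_block hB hper hm (by rw [hk2]; exact hj2) (by rw [hk2]; exact hj3)
  have e0 : (j' + 1 - 1) * ℓ = j' * ℓ := by simp
  have e1 : (j' + 1) * ℓ = j' * ℓ + ℓ := by ring
  rw [e0, e1] at hAblk hBblk
  have hAm1 := (hA.2.1 m hm).1
  have hBm1 := (hB.2.1 m hm).1
  have hiff : A m ≤ ℓ ↔ B m ≤ ℓ := by
    rw [enum_le_iff hA hm, enum_le_iff hB hm, ← hk, hk2]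
  have hAsh : A (m + k) = A m + ℓ := enum_add_period hA hper hm
  have hBsh : B (m + k) = B m + ℓ := by
    have := enum_add_period hB hper hm
    rw [hk2] at this
    exact this
  refine ⟨hAm1, hBm1, by omega, by omega, hiff, hAsh, hBsh, ?_⟩
  intro hlt
  have hkm : k < m := by
    by_contra hc
    have : m ≤ cnt w 1 ℓ := by omega
    have := (enum_le_iff hA hm).mpr this
    omega
  have hm' : 1 ≤ m - k := by omega
  have hA' : A ((m - k) + k) = A (m - k) + ℓ := enum_add_period hA hper hm'
  have hB' : B ((m - k) + k) = B (m - k) + ℓ := by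
    have := enum_add_period hB hper hm'
    rw [hk2] at this
    exact this
  rw [show m - k + k = m by omega] at hA' hB'
  exact ⟨hkm, hm', hA', hB'⟩

/-- Structural facts about a nonzero element of `Pword A B`. -/
lemma P_struct (hℓ : 1 ≤ ℓ) (hbin : ∀ i, 1 ≤ i → w i = 1 ∨ w i = 2)
    (hper : ∀ i, 1 ≤ i → w (i + ℓ) = w i)
    (hcount : cnt w 1 ℓ = cnt w 2 ℓ)
    (hA : EnumOcc w 1 A) (hB : EnumOcc w 2 B) {p : ℕ × ℕ}
    (hp : p ∈ Pword A B) (hne : p ≠ (0,0)) :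
    1 ≤ p.1 ∧ 1 ≤ p.2 ∧ p.1 < p.2 + ℓ ∧ p.2 < p.1 + ℓ ∧ (p.1 ≤ ℓ ↔ p.2 ≤ ℓ) ∧ p.1 ≠ p.2 ∧
      (p.1 + ℓ, p.2 + ℓ) ∈ Pword A B ∧
      (ℓ < p.1 → (p.1 - ℓ, p.2 - ℓ) ∈ Pword A B ∧ ℓ < p.2) := by
  rcases P_cases hp with h0 | ⟨m, hm, rfl⟩ | ⟨m, hm, rfl⟩
  · exact absurd h0 hne
  · obtain ⟨h1, h2, h3, h4, h5, h6, h7, h8⟩ := pair_all hℓ hbin hper hcount hA hB hm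
    have hne' : A m ≠ B m := A_ne_B hA hB hm hm
    refine ⟨h1, h2, h3, h4, h5, hne', ?_, ?_⟩
    · have : (A (m + cnt w 1 ℓ), B (m + cnt w 1 ℓ)) ∈ Pword A B := P_AB (by omega)
      rw [h6, h7] at this
      exact this
    · intro hlt
      obtain ⟨hkm, hm', hA', hB'⟩ := h8 hlt
      have hmem : (A (m - cnt w 1 ℓ), B (m - cnt w 1 ℓ)) ∈ Pword A B := P_AB hm'
      constructor
      · have e1 : (A m - ℓ) = A (m - cnt w 1 ℓ) := by omega
        have e2 : (B m - ℓ) = B (m - cnt w 1 ℓ) := by omega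
        simpa [e1, e2] using hmem
      · omega
  · obtain ⟨h1, h2, h3, h4, h5, h6, h7, h8⟩ := pair_all hℓ hbin hper hcount hA hB hm
    have hne' : A m ≠ B m := A_ne_B hA hB hm hm
    refine ⟨h2, h1, h4, h3, h5.symm, fun h => hne' h.symm, ?_, ?_⟩
    · have : (B (m + cnt w 1 ℓ), A (m + cnt w 1 ℓ)) ∈ Pword A B := P_BA (by omega)
      rw [h6, h7] at this
      exact this
    · intro hlt
      have hltA : ℓ < A m := by
        simp only at hlt
        by_contra hc
        have := h5.mp (by omega)
        omega
      obtain ⟨hkm, hm', hA', hB'⟩ := h8 hltA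
      have hmem : (B (m - cnt w 1 ℓ), A (m - cnt w 1 ℓ)) ∈ Pword A B := P_BA hm'
      constructor
      · have e1 : (A m - ℓ) = A (m - cnt w 1 ℓ) := by omega
        have e2 : (B m - ℓ) = B (m - cnt w 1 ℓ) := by omega
        simpa [e1, e2] using hmem
      · simp only
        omega

lemma D_axis1 (hA : EnumOcc w 1 A) (hB : EnumOcc w 2 B) {c : ℕ}
    (h : ((c, 0) : ℕ × ℕ) ∈ DiffOf (Pword A B) (Pword A B)) : c = 0 := by
  obtain ⟨x, hx, y, hy, hy1, hy2, heq⟩ := h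
  obtain ⟨x1, x2⟩ := x
  obtain ⟨y1, y2⟩ := y
  simp only at hy1 hy2
  have e1 : c = x1 - y1 := congrArg Prod.fst heq
  have e2 : (0:ℕ) = x2 - y2 := congrArg Prod.snd heq
  rcases P_cases hx with h0 | ⟨m, hm, hx'⟩ | ⟨m, hm, hx'⟩
  · rw [Prod.mk.injEq] at h0
    omega
  all_goals rw [Prod.mk.injEq] at hx'
  all_goals obtain ⟨rfl, rfl⟩ := hx'
  · rcases P_cases hy with h0 | ⟨n, hn, hy'⟩ | ⟨n, hn, hy'⟩
    · rw [Prod.mk.injEq] at h0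
      have := (hB.2.1 m hm).1
      omega
    · rw [Prod.mk.injEq] at hy'
      obtain ⟨rfl, rfl⟩ := hy'
      have : m = n := enum_inj hB hm hn (by omega)
      subst this
      omega
    · rw [Prod.mk.injEq] at hy'
      obtain ⟨rfl, rfl⟩ := hy'
      have : B m = A n := by omega
      exact absurd this.symm (A_ne_B hA hB hn hm)
  · rcases P_cases hy with h0 | ⟨n, hn, hy'⟩ | ⟨n, hn, hy'⟩
    · rw [Prod.mk.injEq] at h0
      have := (hA.2.1 m hm).1
      omega
    · rw [Prod.mk.injEq] at hy'
      obtain ⟨rfl, rfl⟩ := hy'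
      have : A m = B n := by omega
      exact absurd this (A_ne_B hA hB hm hn)
    · rw [Prod.mk.injEq] at hy'
      obtain ⟨rfl, rfl⟩ := hy'
      have : m = n := enum_inj hA hm hn (by omega)
      subst this
      omega

lemma D_axis2 (hA : EnumOcc w 1 A) (hB : EnumOcc w 2 B) {c : ℕ}
    (h : ((0, c) : ℕ × ℕ) ∈ DiffOf (Pword A B) (Pword A B)) : c = 0 := by
  obtain ⟨x, hx, y, hy, hy1, hy2, heq⟩ := h
  obtain ⟨x1, x2⟩ := x
  obtain ⟨y1, y2⟩ := y
  simp only at hy1 hy2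
  have e1 : (0:ℕ) = x1 - y1 := congrArg Prod.fst heq
  have e2 : c = x2 - y2 := congrArg Prod.snd heq
  rcases P_cases hx with h0 | ⟨m, hm, hx'⟩ | ⟨m, hm, hx'⟩
  · rw [Prod.mk.injEq] at h0
    omega
  all_goals rw [Prod.mk.injEq] at hx'
  all_goals obtain ⟨rfl, rfl⟩ := hx'
  · rcases P_cases hy with h0 | ⟨n, hn, hy'⟩ | ⟨n, hn, hy'⟩
    · rw [Prod.mk.injEq] at h0
      have := (hA.2.1 m hm).1
      omega
    · rw [Prod.mk.injEq] at hy'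
      obtain ⟨rfl, rfl⟩ := hy'
      have : m = n := enum_inj hA hm hn (by omega)
      subst this
      omega
    · rw [Prod.mk.injEq] at hy'
      obtain ⟨rfl, rfl⟩ := hy'
      have : A m = B n := by omega
      exact absurd this (A_ne_B hA hB hm hn)
  · rcases P_cases hy with h0 | ⟨n, hn, hy'⟩ | ⟨n, hn, hy'⟩
    · rw [Prod.mk.injEq] at h0
      have := (hB.2.1 m hm).1
      omega
    · rw [Prod.mk.injEq] at hy'
      obtain ⟨rfl, rfl⟩ := hy'
      have : B m = A n := by omega
      exact absurd this.symm (A_ne_B hA hB hn hm)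
    · rw [Prod.mk.injEq] at hy'
      obtain ⟨rfl, rfl⟩ := hy'
      have : m = n := enum_inj hB hm hn (by omega)
      subst this
      omega

lemma D_down (hℓ : 1 ≤ ℓ) (hbin : ∀ i, 1 ≤ i → w i = 1 ∨ w i = 2)
    (hper : ∀ i, 1 ≤ i → w (i + ℓ) = w i)
    (hcount : cnt w 1 ℓ = cnt w 2 ℓ)
    (hA : EnumOcc w 1 A) (hB : EnumOcc w 2 B) {d : ℕ × ℕ}
    (hd : d ∈ DiffOf (Pword A B) (Pword A B)) (h1 : ℓ ≤ d.1) (h2 : ℓ ≤ d.2) :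
    (d.1 - ℓ, d.2 - ℓ) ∈ DiffOf (Pword A B) (Pword A B) := by
  obtain ⟨x, hx, y, hy, hy1, hy2, heq⟩ := hd
  have e1 : d.1 = x.1 - y.1 := congrArg Prod.fst heq
  have e2 : d.2 = x.2 - y.2 := congrArg Prod.snd heq
  have hxne : x ≠ (0,0) := by
    intro h0
    rw [h0] at hy1 e1
    simp only at hy1 e1
    omega
  have hstr := P_struct hℓ hbin hper hcount hA hB hx hxne
  have hylb : y = (0,0) ∨ (1 ≤ y.1 ∧ 1 ≤ y.2) := by
    rcases P_cases hy with h0 | ⟨n, hn, rfl⟩ | ⟨n, hn, rfl⟩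
    · exact Or.inl h0
    · exact Or.inr ⟨(hA.2.1 n hn).1, (hB.2.1 n hn).1⟩
    · exact Or.inr ⟨(hB.2.1 n hn).1, (hA.2.1 n hn).1⟩
  have hx1 : ℓ < x.1 := by
    by_contra hc
    have hx1e : x.1 = ℓ := by omega
    have hyz : y = (0,0) := by
      rcases hylb with h0 | ⟨hy1', hy2'⟩
      · exact h0
      · omega
    rw [hyz] at hy2 e2
    simp only at hy2 e2
    have hx2l : x.2 ≤ ℓ := hstr.2.2.2.2.1.mp (by omega)
    have : x.1 = x.2 := by omega
    exact hstr.2.2.2.2.2.1 this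
  obtain ⟨hdown, hx2⟩ := hstr.2.2.2.2.2.2.2 hx1
  refine ⟨(x.1 - ℓ, x.2 - ℓ), hdown, y, hy, ?_, ?_, ?_⟩
  · simp only
    omega
  · simp only
    omega
  · simp only [Prod.mk.injEq]
    omega

end PLayer

section MainK

variable {w : ℕ → ℕ} {ℓ : ℕ} {A B : ℕ → ℕ}

lemma main_K (hℓ : 1 ≤ ℓ) (hbin : ∀ i, 1 ≤ i → w i = 1 ∨ w i = 2)
    (hper : ∀ i, 1 ≤ i → w (i + ℓ) = w i)
    (hcount : cnt w 1 ℓ = cnt w 2 ℓ)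
    (hA : EnumOcc w 1 A) (hB : EnumOcc w 2 B)
    (H : ∀ x : ℕ × ℕ, x.1 ≤ 2 * ℓ → x.2 ≤ 2 * ℓ → x ∉ Pword A B →
      ∃ p ∈ Pword A B, p.1 ≤ x.1 ∧ p.2 ≤ x.2 ∧
        (x.1 - p.1, x.2 - p.2) ∉ DiffOf (Pword A B) (Pword A B)) :
    ∀ x : ℕ × ℕ, x ∉ Pword A B →
      ∃ p ∈ Pword A B, p.1 ≤ x.1 ∧ p.2 ≤ x.2 ∧
        (x.1 - p.1, x.2 - p.2) ∉ DiffOf (Pword A B) (Pword A B) := by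
  suffices h : ∀ n (x : ℕ × ℕ), x.1 + x.2 ≤ n → x ∉ Pword A B →
      ∃ p ∈ Pword A B, p.1 ≤ x.1 ∧ p.2 ≤ x.2 ∧
        (x.1 - p.1, x.2 - p.2) ∉ DiffOf (Pword A B) (Pword A B) by
    exact fun x hx => h (x.1 + x.2) x le_rfl hx
  intro n
  induction n with
  | zero =>
    intro x hx hxP
    obtain ⟨x1, x2⟩ := x
    simp only at hx
    exfalso
    apply hxP
    have h1 : x1 = 0 := by omega
    have h2 : x2 = 0 := by omega
    rw [h1, h2]
    exact P_zero
  | succ n ih =>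
    intro x hsum hxP
    by_cases hsq : x.1 ≤ 2*ℓ ∧ x.2 ≤ 2*ℓ
    · exact H x hsq.1 hsq.2 hxP
    · by_cases hc1 : x.2 + ℓ ≤ x.1
      · -- far below the diagonal
        rcases Nat.eq_zero_or_pos x.2 with h0 | h0
        · refine ⟨(0,0), P_zero, Nat.zero_le _, Nat.zero_le _, ?_⟩
          intro hD
          simp only [Nat.sub_zero] at hD
          rw [h0] at hD
          have := D_axis1 hA hB hD
          omega
        · rcases hbin x.2 h0 with hw1 | hw2
          · obtain ⟨m, hm, hAm⟩ := hA.2.2 x.2 h0 hw1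
            obtain ⟨_, _, _, h4, _⟩ := pair_all hℓ hbin hper hcount hA hB hm
            refine ⟨(B m, A m), P_BA hm, ?_, ?_, ?_⟩
            · simp only
              omega
            · simp only
              omega
            · simp only
              intro hD
              rw [hAm, Nat.sub_self] at hD
              have := D_axis1 hA hB hD
              omega
          · obtain ⟨m, hm, hBm⟩ := hB.2.2 x.2 h0 hw2
            obtain ⟨_, _, h3, _⟩ := pair_all hℓ hbin hper hcount hA hB hm
            refine ⟨(A m, B m), P_AB hm, ?_, ?_, ?_⟩
            · simp only
              omega
            · simp only
              omega
            · simp only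
              intro hD
              rw [hBm, Nat.sub_self] at hD
              have := D_axis1 hA hB hD
              omega
      · by_cases hc2 : x.1 + ℓ ≤ x.2
        · -- far above the diagonal
          rcases Nat.eq_zero_or_pos x.1 with h0 | h0
          · refine ⟨(0,0), P_zero, Nat.zero_le _, Nat.zero_le _, ?_⟩
            intro hD
            simp only [Nat.sub_zero] at hD
            rw [h0] at hD
            have := D_axis2 hA hB hD
            omega
          · rcases hbin x.1 h0 with hw1 | hw2
            · obtain ⟨m, hm, hAm⟩ := hA.2.2 x.1 h0 hw1
              obtain ⟨_, _, _, h4, _⟩ := pair_all hℓ hbin hper hcount hA hB hm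
              refine ⟨(A m, B m), P_AB hm, ?_, ?_, ?_⟩
              · simp only
                omega
              · simp only
                omega
              · simp only
                intro hD
                rw [hAm, Nat.sub_self] at hD
                have := D_axis2 hA hB hD
                omega
            · obtain ⟨m, hm, hBm⟩ := hB.2.2 x.1 h0 hw2
              obtain ⟨_, _, h3, _⟩ := pair_all hℓ hbin hper hcount hA hB hm
              refine ⟨(B m, A m), P_BA hm, ?_, ?_, ?_⟩
              · simp only
                omega
              · simp only
                omega
              · simp only
                intro hD
                rw [hBm, Nat.sub_self] at hD
                have := D_axis2 hA hB hD
                omega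
        · -- near the diagonal: shift down by (ℓ, ℓ)
          have hx1 : ℓ < x.1 := by omega
          have hx2 : ℓ < x.2 := by omega
          have hx'P : (x.1 - ℓ, x.2 - ℓ) ∉ Pword A B := by
            intro hmem
            apply hxP
            have hne : ((x.1 - ℓ, x.2 - ℓ) : ℕ × ℕ) ≠ (0,0) := by
              simp only [ne_eq, Prod.mk.injEq]
              omega
            have := (P_struct hℓ hbin hper hcount hA hB hmem hne).2.2.2.2.2.2.1
            simp only at this
            rw [show x.1 - ℓ + ℓ = x.1 by omega, show x.2 - ℓ + ℓ = x.2 by omega] at this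
            exact this
          obtain ⟨p, hpP, hp1, hp2, hpD⟩ := ih (x.1 - ℓ, x.2 - ℓ) (by simp only; omega) hx'P
          simp only at hp1 hp2 hpD
          refine ⟨p, hpP, by omega, by omega, ?_⟩
          intro hD
          apply hpD
          have := D_down hℓ hbin hper hcount hA hB hD (by simp only; omega) (by simp only; omega)
          simp only at this
          rw [show x.1 - p.1 - ℓ = x.1 - ℓ - p.1 by omega,
            show x.2 - p.2 - ℓ = x.2 - ℓ - p.2 by omega] at this
          exact this

end MainK

/-- For a periodic balanced binary word, `P_w` is 1-invariant iff invariance can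
be checked on the square [0,2ℓ]². -/
theorem periodic_word_one_invariant_iff (w : ℕ → ℕ) (ℓ : ℕ) (hℓ : 1 ≤ ℓ)
    (hbin : ∀ i, 1 ≤ i → w i = 1 ∨ w i = 2)
    (hper : ∀ i, 1 ≤ i → w (i + ℓ) = w i)
    (hcount : ((Finset.Icc 1 ℓ).filter (fun i => w i = 1)).card =
              ((Finset.Icc 1 ℓ).filter (fun i => w i = 2)).card)
    (A B : ℕ → ℕ) (hA : EnumOcc w 1 A) (hB : EnumOcc w 2 B) :
    (∃ I : Set (ℕ × ℕ), (0, 0) ∉ I ∧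
        IsPPositions2 (fun p => I ∩ {m | m.1 ≤ p.1 ∧ m.2 ≤ p.2}) (Pword A B)) ↔
      ∀ x : ℕ × ℕ, x.1 ≤ 2 * ℓ → x.2 ≤ 2 * ℓ → x ∉ Pword A B →
        ∃ p ∈ Pword A B, p.1 ≤ x.1 ∧ p.2 ≤ x.2 ∧
          (x.1 - p.1, x.2 - p.2) ∉ DiffOf (Pword A B) (Pword A B) := by
  have hcount' : cnt w 1 ℓ = cnt w 2 ℓ := hcount
  constructor
  · rintro ⟨I, hI0, hC1, hC2⟩ x hx1 hx2 hxP
    obtain ⟨m, hm, hmP⟩ := hC2 x hxP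
    obtain ⟨hmI, hm1, hm2⟩ : m ∈ I ∧ m.1 ≤ x.1 ∧ m.2 ≤ x.2 := ⟨hm.1, hm.2.1, hm.2.2⟩
    refine ⟨(x.1 - m.1, x.2 - m.2), hmP, Nat.sub_le _ _, Nat.sub_le _ _, ?_⟩
    have e1 : x.1 - (x.1 - m.1) = m.1 := by omega
    have e2 : x.2 - (x.2 - m.2) = m.2 := by omega
    simp only [e1, e2]
    intro hD
    obtain ⟨a, haP, b, hbP, hb1, hb2, heq⟩ := hD
    have f1 : m.1 = a.1 - b.1 := congrArg Prod.fst heq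
    have f2 : m.2 = a.2 - b.2 := congrArg Prod.snd heq
    have := hC1 a haP m ⟨hmI, by simp only [Set.mem_setOf_eq]; omega⟩
    apply this
    rw [show a.1 - m.1 = b.1 by omega, show a.2 - m.2 = b.2 by omega]
    exact hbP
  · intro H
    have K := main_K hℓ hbin hper hcount' hA hB H
    refine ⟨(DiffOf (Pword A B) (Pword A B))ᶜ, ?_, ?_, ?_⟩
    · intro h
      exact h ⟨(0,0), P_zero, (0,0), P_zero, le_rfl, le_rfl, rfl⟩
    · intro p hpP m hm hcontra
      obtain ⟨hmD, hm1, hm2⟩ : (m ∉ DiffOf (Pword A B) (Pword A B)) ∧ m.1 ≤ p.1 ∧ m.2 ≤ p.2 :=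
        ⟨hm.1, hm.2.1, hm.2.2⟩
      apply hmD
      refine ⟨p, hpP, (p.1 - m.1, p.2 - m.2), hcontra, Nat.sub_le _ _, Nat.sub_le _ _, ?_⟩
      simp only
      rw [show p.1 - (p.1 - m.1) = m.1 by omega, show p.2 - (p.2 - m.2) = m.2 by omega]
    · intro q hq
      obtain ⟨p, hpP, hp1, hp2, hpD⟩ := K q hq
      refine ⟨(q.1 - p.1, q.2 - p.2), ⟨hpD, ?_⟩, ?_⟩
      · simp only [Set.mem_setOf_eq]
        omega
      · simp only
        rw [show q.1 - (q.1 - p.1) = p.1 by omega, show q.2 - (q.2 - p.2) = p.2 by omega]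
        exact hpP
end

section
/- For every integer s ≥ 1, the positive real root of X³ − sX² − X − 1 is a Pisot number: it is greater than 1 and the other two (complex conjugate) roots have modulus strictly less than 1. -/
/-- For every integer s ≥ 1, the positive real root of X³ − sX² − X − 1 is a
Pisot number: it is > 1 and all other complex roots have modulus < 1. -/
theorem cubic_root_is_pisot (s : ℕ) (hs : 1 ≤ s) :
    ∃ α : ℝ, 1 < α ∧
      α ^ 3 - (s : ℝ) * α ^ 2 - α - 1 = 0 ∧
      ∀ z : ℂ, z ^ 3 - (s : ℂ) * z ^ 2 - z - 1 = 0 → z ≠ (α : ℂ) →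
        ‖z‖ < 1 := by
  have hs' : (1 : ℝ) ≤ s := by exact_mod_cast hs
  -- get the real root by IVT on [s, s+1]
  have hf : Continuous fun x : ℝ => x ^ 3 - (s : ℝ) * x ^ 2 - x - 1 := by continuity
  obtain ⟨α, hαmem, hα⟩ : ∃ α ∈ Set.Icc (s : ℝ) (s + 1),
      α ^ 3 - (s : ℝ) * α ^ 2 - α - 1 = 0 := by
    have hle : (s : ℝ) ≤ s + 1 := by linarith
    have := intermediate_value_Icc hle hf.continuousOn
    have h0 : (0 : ℝ) ∈ Set.Icc ((s:ℝ) ^ 3 - (s : ℝ) * (s:ℝ) ^ 2 - s - 1)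
        (((s:ℝ)+1) ^ 3 - (s : ℝ) * ((s:ℝ)+1) ^ 2 - ((s:ℝ)+1) - 1) := by
      constructor <;> nlinarith
    obtain ⟨α, hmem, heq⟩ := this h0
    exact ⟨α, hmem, heq⟩
  obtain ⟨hαl, hαr⟩ := hαmem
  -- α is strictly between s and s+1
  have hαs : (s : ℝ) < α := by
    rcases lt_or_eq_of_le hαl with h | h
    · exact h
    · exfalso; rw [← h] at hα; nlinarith
  have hαs1 : α < (s : ℝ) + 1 := by
    rcases lt_or_eq_of_le hαr with h | h
    · exact h
    · exfalso; rw [h] at hα; nlinarith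
  have hα1 : 1 < α := lt_of_le_of_lt hs' hαs
  -- the quadratic cofactor's constant term c = α² - sα - 1 satisfies α * c = 1
  set c : ℝ := α ^ 2 - (s : ℝ) * α - 1 with hcdef
  set b : ℝ := α - s with hbdef
  have hαc : α * c = 1 := by rw [hcdef]; linear_combination hα
  have hcpos : 0 < c := by nlinarith
  have hclt : c < 1 := by nlinarith
  have hb0 : 0 < b := by rw [hbdef]; linarith
  have hb1 : b < 1 := by rw [hbdef]; linarith
  refine ⟨α, hα1, hα, fun z hz hne => ?_⟩
  -- complexify the root equation
  have hαC : (α : ℂ) ^ 3 - (s : ℂ) * (α : ℂ) ^ 2 - (α : ℂ) - 1 = 0 := by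
    have : ((α ^ 3 - (s : ℝ) * α ^ 2 - α - 1 : ℝ) : ℂ) = 0 := by rw [hα]; simp
    push_cast at this
    linear_combination this
  -- factor out (z - α)
  have hfac : (z - (α : ℂ)) * (z ^ 2 + (b : ℂ) * z + (c : ℂ)) = 0 := by
    rw [hbdef, hcdef]
    push_cast
    linear_combination hz - hαC
  have hq : z ^ 2 + (b : ℂ) * z + (c : ℂ) = 0 :=
    (mul_eq_zero.mp hfac).resolve_left (sub_ne_zero.mpr hne)
  -- split into real/imaginary parts
  set x : ℝ := z.re with hx
  set y : ℝ := z.im with hy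
  have hre : x ^ 2 - y ^ 2 + b * x + c = 0 := by
    have := congrArg Complex.re hq
    simpa [Complex.add_re, Complex.mul_re, pow_two, Complex.add_im, hx, hy] using this
  have him : 2 * x * y + b * y = 0 := by
    have := congrArg Complex.im hq
    simp [Complex.add_im, Complex.mul_im, pow_two, hx, hy] at this
    linarith
  have habs : ‖z‖ ^ 2 = x ^ 2 + y ^ 2 := by
    rw [Complex.sq_norm, Complex.normSq_apply, hx, hy]; ring
  by_cases hy0 : y = 0
  · -- real root: show -1 < x < 0
    rw [hy0] at hre
    have hre' : x ^ 2 + b * x + c = 0 := by linear_combination hre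
    have hxneg : x < 0 := by
      by_contra h
      push_neg at h
      have h1 : 0 ≤ b * x := mul_nonneg (le_of_lt hb0) h
      have h2 : 0 ≤ x ^ 2 := sq_nonneg x
      linarith
    have hxgt : -1 < x := by
      by_contra h
      push_neg at h
      have h1 : 0 ≤ (-x) * (-x - b) :=
        mul_nonneg (by linarith) (by linarith)
      have h2 : (-x) * (-x - b) = x ^ 2 + b * x := by ring
      linarith
    have hsq : ‖z‖ ^ 2 < 1 := by
      rw [habs, hy0]
      have h1 : 0 < (1 - x) * (1 + x) := mul_pos (by linarith) (by linarith)
      have h2 : (1 - x) * (1 + x) = 1 - x ^ 2 := by ring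
      have h3 : (0:ℝ) ^ 2 = 0 := by norm_num
      linarith
    exact (pow_lt_one_iff_of_nonneg (norm_nonneg z) two_ne_zero).mp hsq
  · -- complex root: x = -b/2, x² + y² = c
    have hx2 : 2 * x + b = 0 := by
      have : y * (2 * x + b) = 0 := by linarith [him]
      exact (mul_eq_zero.mp this).resolve_left hy0
    have hsum : x ^ 2 + y ^ 2 = c := by nlinarith [hre, hx2]
    have hsq : ‖z‖ ^ 2 < 1 := by rw [habs, hsum]; exact hclt
    exact (pow_lt_one_iff_of_nonneg (norm_nonneg z) two_ne_zero).mp hsq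
end

section
/- Let (T_i) be defined by T₀ = 1, T₁ = 2, T₂ = 4, T_{i+3} = T_{i+2} + T_{i+1} + T_i. Every positive integer m has a unique representation m = Σ c_j T_j with digits c_j ∈ {0,1}, leading digit nonzero, and no three consecutive digits all equal to 1. -/
section Trib

variable {T : ℕ → ℕ}

private def Good (S : Finset ℕ) : Prop := ∀ j, ¬(j ∈ S ∧ j + 1 ∈ S ∧ j + 2 ∈ S)

private lemma Good.mono {S S' : Finset ℕ} (h : Good S) (hsub : S' ⊆ S) : Good S' := by
  intro j hj
  exact h j ⟨hsub hj.1, hsub hj.2.1, hsub hj.2.2⟩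

private lemma trib_pos (h0 : T 0 = 1) (h1 : T 1 = 2) (h2 : T 2 = 4)
    (hrec : ∀ i, T (i + 3) = T (i + 2) + T (i + 1) + T i) : ∀ i, 0 < T i := by
  intro i
  induction i using Nat.strong_induction_on with
  | _ i ih =>
    match i with
    | 0 => omega
    | 1 => omega
    | 2 => omega
    | (n+3) =>
      have := ih n (by omega)
      have := hrec n
      omega

private lemma trib_mono (h0 : T 0 = 1) (h1 : T 1 = 2) (h2 : T 2 = 4)
    (hrec : ∀ i, T (i + 3) = T (i + 2) + T (i + 1) + T i) :
    StrictMono T := by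
  have hpos := trib_pos h0 h1 h2 hrec
  apply strictMono_nat_of_lt_succ
  intro i
  match i with
  | 0 => show T 0 < T 1; omega
  | 1 => show T 1 < T 2; omega
  | (n+2) =>
    show T (n+2) < T (n+3)
    have := hrec n
    have := hpos n
    have := hpos (n+1)
    omega

private lemma trib_double (h0 : T 0 = 1) (h1 : T 1 = 2) (h2 : T 2 = 4)
    (hrec : ∀ i, T (i + 3) = T (i + 2) + T (i + 1) + T i) :
    ∀ k, T (k + 1) ≤ 2 * T k := by
  intro k
  match k with
  | 0 => show T 1 ≤ 2 * T 0; omega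
  | 1 => show T 2 ≤ 2 * T 1; omega
  | 2 =>
    show T 3 ≤ 2 * T 2
    have e := hrec 0
    norm_num at e
    omega
  | (n+3) =>
    show T (n+4) ≤ 2 * T (n+3)
    have ha := hrec n
    have hb := hrec (n+1)
    simp only [show n+1+3 = n+4 from rfl, show n+1+2 = n+3 from rfl,
      show n+1+1 = n+2 from rfl] at hb
    have := trib_pos h0 h1 h2 hrec n
    omega

/-- Sum of a good set with indices ≤ k is below `T (k+1)`. -/
private lemma trib_bound (h0 : T 0 = 1) (h1 : T 1 = 2) (h2 : T 2 = 4)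
    (hrec : ∀ i, T (i + 3) = T (i + 2) + T (i + 1) + T i) :
    ∀ k, ∀ S : Finset ℕ, Good S → (∀ j ∈ S, j ≤ k) → ∑ j ∈ S, T j < T (k + 1) := by
  have hpos := trib_pos h0 h1 h2 hrec
  have hmono := trib_mono h0 h1 h2 hrec
  intro k
  induction k using Nat.strong_induction_on with
  | _ k ih =>
    intro S hS hle
    by_cases hk : k ∈ S
    · have hsum : T k + ∑ j ∈ S.erase k, T j = ∑ j ∈ S, T j :=
        Finset.add_sum_erase S T hk
      match k with
      | 0 =>
        have : S.erase 0 = ∅ := by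
          apply Finset.eq_empty_iff_forall_notMem.2
          intro j hj
          have := Finset.mem_erase.1 hj
          have := hle j this.2
          omega
        rw [this] at hsum
        simp at hsum
        show ∑ j ∈ S, T j < T 1
        omega
      | 1 =>
        have hsub : S.erase 1 ⊆ {0} := by
          intro j hj
          have h' := Finset.mem_erase.1 hj
          have := hle j h'.2
          simp
          omega
        have : ∑ j ∈ S.erase 1, T j ≤ ∑ j ∈ ({0} : Finset ℕ), T j :=
          Finset.sum_le_sum_of_subset hsub
        simp at this
        show ∑ j ∈ S, T j < T 2
        omega
      | (n+2) =>
        by_cases hk1 : n + 1 ∈ S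
        · -- n ∉ S by Good
          have hn : n ∉ S := fun hn => hS n ⟨hn, hk1, hk⟩
          have hk1' : n + 1 ∈ S.erase (n+2) := Finset.mem_erase.2 ⟨by omega, hk1⟩
          have hsum2 : T (n+1) + ∑ j ∈ (S.erase (n+2)).erase (n+1), T j
              = ∑ j ∈ S.erase (n+2), T j := Finset.add_sum_erase _ T hk1'
          set S2 := (S.erase (n+2)).erase (n+1) with hS2
          have hle2 : ∀ j ∈ S2, j + 3 ≤ n + 2 := by
            intro j hj
            have h1 := Finset.mem_erase.1 hj
            have h2 := Finset.mem_erase.1 h1.2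
            have h3 := hle j h2.2
            have : j ≠ n := fun h => hn (h ▸ h2.2)
            omega
          have hrest : ∑ j ∈ S2, T j < T n := by
            match n with
            | 0 =>
              have : S2 = ∅ := by
                apply Finset.eq_empty_iff_forall_notMem.2
                intro j hj
                have := hle2 j hj
                omega
              rw [this]
              simpa using hpos 0
            | (m+1) =>
              exact ih m (by omega) S2
                (hS.mono (Finset.Subset.trans (Finset.erase_subset _ _) (Finset.erase_subset _ _)))
                (fun j hj => by have := hle2 j hj; omega)
          show ∑ j ∈ S, T j < T (n+3)
          have := hrec n
          omega
        · have hle2 : ∀ j ∈ S.erase (n+2), j ≤ n := by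
            intro j hj
            have h' := Finset.mem_erase.1 hj
            have := hle j h'.2
            have : j ≠ n + 1 := fun h => hk1 (h ▸ h'.2)
            omega
          have hrest : ∑ j ∈ S.erase (n+2), T j < T (n+1) :=
            ih n (by omega) _ (hS.mono (Finset.erase_subset _ _))
              (fun j hj => hle2 j hj)
          show ∑ j ∈ S, T j < T (n+3)
          have := hrec n
          have := hpos n
          omega
    · match k with
      | 0 =>
        have : S = ∅ := by
          apply Finset.eq_empty_iff_forall_notMem.2
          intro j hj
          have := hle j hj
          have : j = 0 := by omega
          exact hk (this ▸ hj)
        rw [this]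
        simpa using hpos 1
      | (n+1) =>
        have : ∑ j ∈ S, T j < T (n+1) := by
          apply ih n (by omega) S hS
          intro j hj
          have := hle j hj
          have : j ≠ n + 1 := fun h => hk (h ▸ hj)
          omega
        exact lt_trans this (hmono (by omega))

private lemma trib_gt (h0 : T 0 = 1) (h1 : T 1 = 2) (h2 : T 2 = 4)
    (hrec : ∀ i, T (i + 3) = T (i + 2) + T (i + 1) + T i) : ∀ i, i < T i := by
  intro i
  induction i with
  | zero => omega
  | succ n ihn =>
    have := trib_mono h0 h1 h2 hrec (show n < n + 1 by omega)
    omega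

private lemma trib_exists (h0 : T 0 = 1) (h1 : T 1 = 2) (h2 : T 2 = 4)
    (hrec : ∀ i, T (i + 3) = T (i + 2) + T (i + 1) + T i) :
    ∀ m, 0 < m → ∃ S : Finset ℕ, Good S ∧ m = ∑ j ∈ S, T j := by
  have hpos := trib_pos h0 h1 h2 hrec
  have hmono := trib_mono h0 h1 h2 hrec
  have hgt := trib_gt h0 h1 h2 hrec
  intro m
  induction m using Nat.strong_induction_on with
  | _ m ih =>
    intro hm
    -- greedy: largest k with T k ≤ m
    set k := Nat.findGreatest (fun k => T k ≤ m) m with hkdef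
    have hTk : T k ≤ m :=
      Nat.findGreatest_spec (P := fun k => T k ≤ m) (Nat.zero_le m) (by omega)
    have hTk1 : m < T (k + 1) := by
      by_cases hkm : k + 1 ≤ m
      · by_contra h
        push_neg at h
        exact Nat.findGreatest_is_greatest (P := fun k => T k ≤ m) (by omega) hkm h
      · have h1 : m ≤ k := by omega
        have := hgt (k+1)
        omega
    set r := m - T k with hrdef
    have hrlt : r < T k := by
      have := trib_double h0 h1 h2 hrec k
      omega
    by_cases hr : r = 0
    · refine ⟨{k}, ?_, ?_⟩
      · intro j hj
        simp at hj
        omega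
      · simp
        omega
    · obtain ⟨S', hS', hsum'⟩ := ih r (by have := hpos k; omega) (by omega)
      have hlt : ∀ j ∈ S', j < k := by
        intro j hj
        have h1 : T j ≤ ∑ i ∈ S', T i :=
          Finset.single_le_sum (fun i _ => Nat.zero_le _) hj
        have : T j < T k := by omega
        exact hmono.lt_iff_lt.1 this
      have hknot : k ∉ S' := fun h => by have := hlt k h; omega
      refine ⟨insert k S', ?_, ?_⟩
      · intro j hj
        obtain ⟨hj0, hj1, hj2⟩ := hj
        rcases Finset.mem_insert.1 hj2 with h | h
        · -- j + 2 = k : j, j+1 ∈ S'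
          have hjS : j ∈ S' := by
            rcases Finset.mem_insert.1 hj0 with h' | h'
            · omega
            · exact h'
          have hj1S : j + 1 ∈ S' := by
            rcases Finset.mem_insert.1 hj1 with h' | h'
            · omega
            · exact h'
          -- then T j + T (j+1) ≤ r, but r < T(k+1) - T k = T(j+1) + T j
          have hpairsub : ({j, j+1} : Finset ℕ) ⊆ S' := by
            intro x hx
            simp at hx
            rcases hx with h' | h' <;> simp [h', hjS, hj1S]
          have hpair : T j + T (j + 1) ≤ ∑ i ∈ S', T i := by
            have := Finset.sum_le_sum_of_subset (f := T) hpairsub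
            rwa [Finset.sum_pair (by omega : j ≠ j + 1)] at this
          have hk1 : T (k + 1) = T k + T (j + 1) + T j := by
            rw [← h]; exact hrec j
          omega
        · -- j + 2 ∈ S', so j+2 < k, so j, j+1 ∈ S'
          have h2k := hlt _ h
          have hjS : j ∈ S' := by
            rcases Finset.mem_insert.1 hj0 with h' | h'
            · omega
            · exact h'
          have hj1S : j + 1 ∈ S' := by
            rcases Finset.mem_insert.1 hj1 with h' | h'
            · omega
            · exact h'
          exact hS' j ⟨hjS, hj1S, h⟩
      · rw [Finset.sum_insert hknot]
        omega

private lemma trib_unique (h0 : T 0 = 1) (h1 : T 1 = 2) (h2 : T 2 = 4)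
    (hrec : ∀ i, T (i + 3) = T (i + 2) + T (i + 1) + T i) :
    ∀ m, ∀ S S' : Finset ℕ, Good S → m = ∑ j ∈ S, T j →
      Good S' → m = ∑ j ∈ S', T j → S = S' := by
  have hpos := trib_pos h0 h1 h2 hrec
  have hmono := trib_mono h0 h1 h2 hrec
  have hbound := trib_bound h0 h1 h2 hrec
  intro m
  induction m using Nat.strong_induction_on with
  | _ m ih =>
    intro S S' hS hsum hS' hsum'
    by_cases hm : m = 0
    · have he : ∀ (A : Finset ℕ), m = ∑ j ∈ A, T j → A = ∅ := by
        intro A hA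
        apply Finset.eq_empty_iff_forall_notMem.2
        intro j hj
        have : T j ≤ ∑ i ∈ A, T i :=
          Finset.single_le_sum (fun i _ => Nat.zero_le _) hj
        have := hpos j
        omega
      rw [he S hsum, he S' hsum']
    · have hne : S.Nonempty := by
        rcases Finset.eq_empty_or_nonempty S with h | h
        · rw [h] at hsum; simp at hsum; omega
        · exact h
      have hne' : S'.Nonempty := by
        rcases Finset.eq_empty_or_nonempty S' with h | h
        · rw [h] at hsum'; simp at hsum'; omega
        · exact h
      obtain ⟨k, hkm, hkmax⟩ : ∃ k ∈ S, ∀ j ∈ S, j ≤ k :=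
        ⟨S.max' hne, S.max'_mem hne, fun j hj => S.le_max' j hj⟩
      obtain ⟨k', hk'm, hk'max⟩ : ∃ k ∈ S', ∀ j ∈ S', j ≤ k :=
        ⟨S'.max' hne', S'.max'_mem hne', fun j hj => S'.le_max' j hj⟩
      have hTkm : T k ≤ m := hsum ▸ Finset.single_le_sum (fun i _ => Nat.zero_le _) hkm
      have hTk'm : T k' ≤ m := hsum' ▸ Finset.single_le_sum (fun i _ => Nat.zero_le _) hk'm
      have hmk : m < T (k + 1) := hsum ▸ hbound k S hS hkmax
      have hmk' : m < T (k' + 1) := hsum' ▸ hbound k' S' hS' hk'max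
      have hkk' : k = k' := by
        have h1 : k < k' + 1 := hmono.lt_iff_lt.1 (by omega)
        have h2 : k' < k + 1 := hmono.lt_iff_lt.1 (by omega)
        omega
      subst hkk'
      have e1 : T k + ∑ j ∈ S.erase k, T j = ∑ j ∈ S, T j := Finset.add_sum_erase S T hkm
      have e2 : T k + ∑ j ∈ S'.erase k, T j = ∑ j ∈ S', T j := Finset.add_sum_erase S' T hk'm
      have heq : S.erase k = S'.erase k := by
        apply ih (m - T k) (by have := hpos k; omega)
        · exact hS.mono (Finset.erase_subset _ _)
        · omega
        · exact hS'.mono (Finset.erase_subset _ _)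
        · omega
      have : insert k (S.erase k) = insert k (S'.erase k) := by rw [heq]
      rwa [Finset.insert_erase hkm, Finset.insert_erase hk'm] at this

end Trib

/-- Tribonacci numeration system: every positive integer has a unique
representation as a sum of distinct Tribonacci numbers with no three
consecutive indices used. -/
theorem tribonacci_representation (T : ℕ → ℕ)
    (h0 : T 0 = 1) (h1 : T 1 = 2) (h2 : T 2 = 4)
    (hrec : ∀ i, T (i + 3) = T (i + 2) + T (i + 1) + T i)
    (m : ℕ) (hm : 0 < m) :
    ∃! S : Finset ℕ, (∀ j, ¬(j ∈ S ∧ j + 1 ∈ S ∧ j + 2 ∈ S)) ∧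
      m = ∑ j ∈ S, T j := by
  obtain ⟨S, hS, hsum⟩ := trib_exists h0 h1 h2 hrec m hm
  refine ⟨S, ⟨hS, hsum⟩, ?_⟩
  intro S' ⟨hS', hsum'⟩
  exact trib_unique h0 h1 h2 hrec m S' S hS' hsum' hS hsum
end

section
/- Let w be the fixed point of the morphism f : 1 ↦ 12, 2 ↦ 3, 3 ↦ 12 starting with 1 (so w = 12312123⋯). Let A_m, B_m, C_m be the positions of the m-th occurrence of the letters 1, 2, 3 respectively. Then for all m ≥ 1: B_m = A_m + 1; and for m ≥ 2, C_m = C_{m−1} + 3 if A_m − A_{m−1} = 2, and C_m = C_{m−1} + 5 otherwise; moreover A_m = mex{A_i, B_i, C_i : 1 ≤ i < m} ∪ {0} for m ≥ 2 (the least positive integer not among earlier values), with A₁ = 1, B₁ = 2, C₁ = 3. -/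
/-- The Raleigh morphism 1 ↦ 12, 2 ↦ 3, 3 ↦ 12. -/
def ralMor (a : ℕ) : List ℕ := if a = 2 then [3] else [1, 2]

/-- Applying the morphism to a finite word. -/
def ralSub (l : List ℕ) : List ℕ := l.flatMap ralMor

lemma ralSub_append (a b : List ℕ) : ralSub (a ++ b) = ralSub a ++ ralSub b :=
  List.flatMap_append

lemma ralSub_prefix {a b : List ℕ} (h : a <+: b) : ralSub a <+: ralSub b := by
  obtain ⟨r, rfl⟩ := h
  rw [ralSub_append]; exact ⟨ralSub r, rfl⟩

def RL (k : ℕ) : List ℕ := ralSub^[k] [1]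

lemma RL_succ (k : ℕ) : RL (k+1) = ralSub (RL k) := Function.iterate_succ_apply' _ _ _

lemma RL_zero : RL 0 = [1] := rfl

lemma RL_prefix_succ (k : ℕ) : RL k <+: RL (k+1) := by
  induction k with
  | zero => exact ⟨[2], rfl⟩
  | succ k ih => rw [RL_succ, RL_succ]; exact ralSub_prefix ih

lemma RL_prefix {k k' : ℕ} (h : k ≤ k') : RL k <+: RL k' := by
  induction k' with
  | zero => simp_all
  | succ k' ih =>
    rcases Nat.eq_or_lt_of_le h with rfl | h'
    · rfl
    · exact (ih (Nat.lt_succ_iff.mp h')).trans (RL_prefix_succ k')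

lemma RL_cons (k : ℕ) : ∃ t, RL k = 1 :: t := by
  obtain ⟨r, hr⟩ := RL_prefix (Nat.zero_le k)
  exact ⟨r, by rw [← hr]; rfl⟩

lemma length_le_ralSub (l : List ℕ) : l.length ≤ (ralSub l).length := by
  induction l with
  | nil => simp [ralSub]
  | cons a t ih =>
    have : ralSub (a :: t) = ralMor a ++ ralSub t := rfl
    rw [this, List.length_append, List.length_cons]
    have : 1 ≤ (ralMor a).length := by unfold ralMor; split <;> simp
    omega

lemma RL_length (k : ℕ) : k + 1 ≤ (RL k).length := by
  induction k with
  | zero => simp [RL_zero]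
  | succ k ih =>
    obtain ⟨t, ht⟩ := RL_cons k
    have h1 : RL (k+1) = [1,2] ++ ralSub t := by rw [RL_succ, ht]; rfl
    have h2 := length_le_ralSub t
    have h3 : (RL k).length = t.length + 1 := by rw [ht]; simp
    rw [h1, List.length_append]
    simp at h2 ⊢
    omega

lemma mem_RL {k a : ℕ} (h : a ∈ RL k) : a = 1 ∨ a = 2 ∨ a = 3 := by
  induction k generalizing a with
  | zero => simp [RL_zero] at h; tauto
  | succ k ih =>
    rw [RL_succ] at h
    obtain ⟨b, hb, hab⟩ := List.mem_flatMap.mp h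
    unfold ralMor at hab
    split at hab <;> simp at hab <;> tauto

section W
variable {w : ℕ → ℕ}
  (hw : ∀ k i, i < (ralSub^[k] [1]).length → w (i + 1) = (ralSub^[k] [1])[i]!)

def wsig (w : ℕ → ℕ) : ℕ → ℕ
  | 0 => 0
  | n+1 => wsig w n + (if w (n+1) = 2 then 1 else 2)

def wcnt (w : ℕ → ℕ) : ℕ → ℕ
  | 0 => 0
  | n+1 => wcnt w n + (if w (n+1) = 2 then 1 else 0)

include hw

lemma hw' : ∀ k i, i < (RL k).length → w (i + 1) = (RL k)[i]! := hw

lemma w_mem {i : ℕ} (hi : 1 ≤ i) : w i = 1 ∨ w i = 2 ∨ w i = 3 := by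
  have hl := RL_length i
  have h : i - 1 < (RL i).length := by omega
  have := hw' hw i (i-1) h
  rw [show i - 1 + 1 = i by omega] at this
  rw [this, getElem!_pos (RL i) (i-1) h]
  exact mem_RL (List.getElem_mem h)

lemma w_one : w 1 = 1 := by
  have := hw' hw 0 0 (by simp [RL_zero])
  simpa [RL_zero] using this

lemma w_two : w 2 = 2 := by
  have := hw' hw 1 1 (by show 1 < (ralSub [1]).length; simp [ralSub, ralMor])
  simpa [RL_succ, RL_zero, ralSub, ralMor] using this

lemma w_three : w 3 = 3 := by
  have h : RL 2 = [1,2,3] := by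
    rw [show (2:ℕ) = 1 + 1 from rfl, RL_succ, RL_succ, RL_zero]; rfl
  have := hw' hw 2 2 (by rw [h]; simp)
  simpa [h] using this

lemma wsig_eq_length {k : ℕ} : ∀ n, n ≤ (RL k).length →
    wsig w n = (ralSub ((RL k).take n)).length := by
  intro n
  induction n with
  | zero => simp [wsig, ralSub]
  | succ n ih =>
    intro hn
    have hn' : n < (RL k).length := by omega
    have htake : (RL k).take (n+1) = (RL k).take n ++ [(RL k)[n]] := by
      rw [List.take_succ, List.getElem?_eq_getElem hn']; rfl
    have hwv : w (n+1) = (RL k)[n] := by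
      rw [hw' hw k n hn', getElem!_pos (RL k) n hn']
    have hm : ralSub [(RL k)[n]] = ralMor ((RL k)[n]) := by simp [ralSub]
    have hs : wsig w (n+1) = wsig w n + (if w (n+1) = 2 then 1 else 2) := rfl
    rw [hs, htake, ralSub_append, List.length_append, ih (by omega), hm, ← hwv]
    unfold ralMor
    split <;> simp


omit hw in
lemma wsig_succ (n : ℕ) : wsig w (n+1) = wsig w n + (if w (n+1) = 2 then 1 else 2) := rfl

lemma fp (n : ℕ) :
    (w (n+1) = 2 → w (wsig w n + 1) = 3) ∧
    (w (n+1) ≠ 2 → w (wsig w n + 1) = 1 ∧ w (wsig w n + 2) = 2) := by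
  set k := n + 1 with hk
  have hn' : n < (RL k).length := by have := RL_length k; omega
  have hp : wsig w n = (ralSub ((RL k).take n)).length :=
    wsig_eq_length hw n (by omega)
  have htake : (RL k).take (n+1) = (RL k).take n ++ [(RL k)[n]] := by
    rw [List.take_succ, List.getElem?_eq_getElem hn']; rfl
  have hwv : w (n+1) = (RL k)[n] := by
    rw [hw' hw k n hn', getElem!_pos (RL k) n hn']
  have hst : ralSub ((RL k).take (n+1)) =
      ralSub ((RL k).take n) ++ ralMor (w (n+1)) := by
    rw [htake, ralSub_append, hwv]; simp [ralSub]
  have hpref : ralSub ((RL k).take n) ++ ralMor (w (n+1)) <+: ralSub (RL k) := by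
    rw [← hst]
    exact ralSub_prefix (List.take_prefix _ _)
  rw [← RL_succ k] at hpref
  obtain ⟨r, hr⟩ := hpref
  have hval : ∀ j, j < (ralMor (w (n+1))).length →
      w (wsig w n + j + 1) = (ralMor (w (n+1)))[j]! := by
    intro j hj
    have hlt : wsig w n + j < (RL (k+1)).length := by
      rw [← hr, List.length_append, List.length_append, hp]; omega
    rw [hw' hw (k+1) _ hlt, getElem!_pos (RL (k+1)) _ hlt]
    have hlt2 : wsig w n + j <
        (ralSub ((RL k).take n) ++ ralMor (w (n+1))).length := by
      rw [List.length_append, hp]; omega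
    rw [getElem!_pos (ralMor (w (n+1))) j hj]
    rw [List.getElem_of_eq hr.symm hlt, List.getElem_append_left hlt2,
      List.getElem_append_right (by omega)]
    congr 1
    omega
  constructor
  · intro h2
    have := hval 0 (by simp [ralMor, h2, ← hk])
    simpa [ralMor, h2, ← hk] using this
  · intro h2
    have ha := hval 0 (by simp [ralMor, h2, ← hk])
    have hb := hval 1 (by simp [ralMor, h2, ← hk])
    simp [ralMor, h2, ← hk] at ha hb
    exact ⟨ha, by simpa [show wsig w n + 1 + 1 = wsig w n + 2 by omega] using hb⟩


omit hw in
lemma wsig_lt {m n : ℕ} (h : m < n) : wsig w m < wsig w n := by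
  induction n with
  | zero => omega
  | succ n ih =>
    have : wsig w n ≤ wsig w (n+1) := by rw [wsig_succ]; split <;> omega
    rcases Nat.lt_succ_iff_lt_or_eq.mp h with h' | rfl
    · have := ih h'; omega
    · rw [wsig_succ]; split <;> omega

omit hw in
lemma le_wsig (n : ℕ) : n ≤ wsig w n := by
  induction n with
  | zero => simp [wsig]
  | succ n ih => rw [wsig_succ]; split <;> omega

omit hw in
lemma wcnt_succ (n : ℕ) : wcnt w (n+1) = wcnt w n + (if w (n+1) = 2 then 1 else 0) := rfl

omit hw in
lemma wsig_add_wcnt (n : ℕ) : wsig w n + wcnt w n = 2 * n := by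
  induction n with
  | zero => simp [wsig, wcnt]
  | succ n ih => rw [wsig_succ, wcnt_succ]; split <;> omega

lemma classify {i : ℕ} (hi : 1 ≤ i) : ∃ n,
    ((w (n+1) = 2 ∧ i = wsig w n + 1 ∧ i = wsig w (n+1) ∧ w i = 3) ∨
     (w (n+1) ≠ 2 ∧ (i = wsig w n + 1 ∧ w i = 1 ∨ i = wsig w n + 2 ∧ w i = 2))) := by
  have hex : ∃ n, i ≤ wsig w n := ⟨i, le_wsig i⟩
  have hn : i ≤ wsig w (Nat.find hex) := Nat.find_spec hex
  have hne : Nat.find hex ≠ 0 := by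
    intro h0
    rw [h0] at hn; simp [wsig] at hn; omega
  obtain ⟨m, hm⟩ := Nat.exists_eq_succ_of_ne_zero hne
  have hlt : wsig w m < i := by
    have h' : ¬ i ≤ wsig w m := Nat.find_min hex (by omega)
    omega
  rw [hm] at hn
  simp only [Nat.succ_eq_add_one] at hn
  refine ⟨m, ?_⟩
  by_cases h2 : w (m+1) = 2
  · have hs := wsig_succ (w := w) m
    rw [if_pos h2] at hs
    have hieq : i = wsig w m + 1 := by omega
    have hv := (fp hw m).1 h2
    exact Or.inl ⟨h2, hieq, by omega, by rw [hieq]; exact hv⟩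
  · have hs := wsig_succ (w := w) m
    rw [if_neg h2] at hs
    obtain ⟨ha, hb⟩ := (fp hw m).2 h2
    rcases (by omega : i = wsig w m + 1 ∨ i = wsig w m + 2) with hieq | hieq
    · exact Or.inr ⟨h2, Or.inl ⟨hieq, by rw [hieq]; exact ha⟩⟩
    · exact Or.inr ⟨h2, Or.inr ⟨hieq, by rw [hieq]; exact hb⟩⟩


omit hw in
lemma wcnt_const {a b : ℕ} (hab : a ≤ b)
    (hno : ∀ i, a < i → i ≤ b → w i ≠ 2) : wcnt w b = wcnt w a := by
  induction b, hab using Nat.le_induction with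
  | base => rfl
  | succ b hb ih =>
    rw [wcnt_succ, if_neg (hno (b+1) (by omega) le_rfl)]
    simpa using ih (fun i h1 h2 => hno i h1 (by omega))

lemma rule2 {i : ℕ} (hi : 1 ≤ i) (h : w i = 2) : 2 ≤ i ∧ w (i-1) = 1 := by
  obtain ⟨n, hc⟩ := classify hw hi
  rcases hc with ⟨_, _, _, h3⟩ | ⟨h2, ⟨hieq, h1⟩ | ⟨hieq, _⟩⟩
  · omega
  · omega
  · obtain ⟨ha, _⟩ := (fp hw n).2 h2
    refine ⟨by omega, ?_⟩
    rw [show i - 1 = wsig w n + 1 by omega]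
    exact ha

lemma rule1 {i : ℕ} (hi : 1 ≤ i) (h : w i = 1) : w (i+1) = 2 := by
  obtain ⟨n, hc⟩ := classify hw hi
  rcases hc with ⟨_, _, _, h3⟩ | ⟨h2, ⟨hieq, _⟩ | ⟨hieq, hv⟩⟩
  · omega
  · obtain ⟨_, hb⟩ := (fp hw n).2 h2
    rw [show i + 1 = wsig w n + 2 by omega]
    exact hb
  · omega

lemma rule3' {i : ℕ} (hi : 1 ≤ i) (h : w i = 3) :
    ∃ n, w (n+1) = 2 ∧ i = wsig w (n+1) := by
  obtain ⟨n, hc⟩ := classify hw hi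
  rcases hc with ⟨h2, _, hieq, _⟩ | ⟨_, ⟨hieq, hv⟩ | ⟨hieq, hv⟩⟩
  · exact ⟨n, h2, hieq⟩
  · omega
  · omega

lemma rule3 {i : ℕ} (hi : 1 ≤ i) (h : w i = 3) : w (i+1) = 1 := by
  obtain ⟨n, h2, hieq⟩ := rule3' hw hi h
  have hn2 : w (n+2) ≠ 2 := by
    intro hx
    have := (rule2 hw (by omega) hx).2
    simp only [show n + 2 - 1 = n + 1 by omega] at this
    omega
  obtain ⟨ha, _⟩ := (fp hw (n+1)).2 hn2
  rw [hieq]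
  exact ha

end W

namespace EnumOcc
variable {w : ℕ → ℕ} {a : ℕ} {A A' : ℕ → ℕ}

lemma le_mono (h : EnumOcc w a A) {m n : ℕ} (hm : 1 ≤ m) (hmn : m ≤ n) :
    A m ≤ A n := by
  rcases Nat.eq_or_lt_of_le hmn with rfl | h'
  · exact le_rfl
  · exact (h.1 m n hm h').le

lemma lt_of_lt (h : EnumOcc w a A) {m n : ℕ} (hm : 1 ≤ m) (hn : 1 ≤ n)
    (hx : A m < A n) : m < n := by
  by_contra hc
  have := le_mono h hn (by omega : n ≤ m)
  omega

lemma inj (h : EnumOcc w a A) {m n : ℕ} (hm : 1 ≤ m) (hn : 1 ≤ n)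
    (hx : A m = A n) : m = n := by
  by_contra hc
  rcases Nat.lt_or_ge m n with h' | h'
  · have := h.1 m n hm h'; omega
  · have := h.1 n m hn (by omega); omega

lemma self_le (h : EnumOcc w a A) {m : ℕ} (hm : 1 ≤ m) : m ≤ A m := by
  induction m with
  | zero => omega
  | succ m ih =>
    rcases Nat.eq_or_lt_of_le hm with h1 | h1
    · have h0 : m = 0 := by omega
      subst h0
      exact (h.2.1 1 le_rfl).1
    · have h2 := ih (by omega)
      have := h.1 m (m+1) (by omega) (by omega)
      omega

lemma between (h : EnumOcc w a A) {m i : ℕ} (hm : 1 ≤ m) (h1 : A m < i)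
    (h2 : i < A (m+1)) : w i ≠ a := by
  intro hv
  have hA1 := (h.2.1 m hm).1
  obtain ⟨j, hj1, hj⟩ := h.2.2 i (by omega) hv
  have hmj : m < j := lt_of_lt h hm hj1 (by omega)
  have : A (m+1) ≤ A j := le_mono h (by omega) (by omega)
  omega

lemma first (h : EnumOcc w a A) {i : ℕ} (hi : 1 ≤ i) (h2 : i < A 1) :
    w i ≠ a := by
  intro hv
  obtain ⟨j, hj1, hj⟩ := h.2.2 i hi hv
  have : A 1 ≤ A j := le_mono h le_rfl hj1
  omega

lemma unique (h : EnumOcc w a A) (h' : EnumOcc w a A') :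
    ∀ m, 1 ≤ m → A m = A' m := by
  intro m
  induction m using Nat.strong_induction_on with
  | _ m ih =>
    intro hm
    obtain ⟨hA1, hAv⟩ := h.2.1 m hm
    obtain ⟨k, hk1, hk⟩ := h'.2.2 (A m) hA1 hAv
    rcases lt_trichotomy k m with hlt | rfl | hgt
    · have h1 := ih k hlt hk1
      have h2 := h.1 k m hk1 hlt
      omega
    · omega
    · exfalso
      have h1 : A' m < A m := by
        have := h'.1 m k hm hgt; omega
      obtain ⟨hB1, hBv⟩ := h'.2.1 m hm
      obtain ⟨j, hj1, hj⟩ := h.2.2 (A' m) hB1 hBv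
      rcases Nat.lt_or_ge j m with hj2 | hj2
      · have h3 := ih j hj2 hj1
        have h4 := h'.1 j m hj1 hj2
        omega
      · have h4 := le_mono h hm hj2
        omega

end EnumOcc

/-- In the fixed point of 1 ↦ 12, 2 ↦ 3, 3 ↦ 12 starting with 1, the positions
A_m, B_m, C_m of the m-th letters 1, 2, 3 satisfy the recursive description of
the P-positions of the Raleigh game. -/
theorem raleigh_word_recursive_characterization (w : ℕ → ℕ)
    (hw : ∀ k i, i < (ralSub^[k] [1]).length → w (i + 1) = (ralSub^[k] [1])[i]!)
    (A B C : ℕ → ℕ)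
    (hA : EnumOcc w 1 A) (hB : EnumOcc w 2 B) (hC : EnumOcc w 3 C) :
    A 1 = 1 ∧ B 1 = 2 ∧ C 1 = 3 ∧
    (∀ m, 1 ≤ m → B m = A m + 1) ∧
    (∀ m, 2 ≤ m →
      (A m - A (m - 1) = 2 → C m = C (m - 1) + 3) ∧
      (A m - A (m - 1) ≠ 2 → C m = C (m - 1) + 5)) ∧
    (∀ m, 2 ≤ m →
      A m = sInf {x : ℕ | 1 ≤ x ∧
        ∀ i, 1 ≤ i → i < m → x ≠ A i ∧ x ≠ B i ∧ x ≠ C i}) := by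
  have hw1 := w_one hw
  have hw2 := w_two hw
  have hw3 := w_three hw
  have hA1 : A 1 = 1 := by
    obtain ⟨m, hm1, hm⟩ := hA.2.2 1 le_rfl hw1
    have h1 : A 1 ≤ A m := hA.le_mono le_rfl hm1
    have h2 : 1 ≤ A 1 := (hA.2.1 1 le_rfl).1
    omega
  have hB1 : B 1 = 2 := by
    obtain ⟨m, hm1, hm⟩ := hB.2.2 2 (by omega) hw2
    have h1 : B 1 ≤ B m := hB.le_mono le_rfl hm1
    have h2 : 1 ≤ B 1 := (hB.2.1 1 le_rfl).1
    have h3 : w (B 1) = 2 := (hB.2.1 1 le_rfl).2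
    have h4 : B 1 ≠ 1 := fun hx => by rw [hx, hw1] at h3; omega
    omega
  have hC1 : C 1 = 3 := by
    obtain ⟨m, hm1, hm⟩ := hC.2.2 3 (by omega) hw3
    have h1 : C 1 ≤ C m := hC.le_mono le_rfl hm1
    have h2 : 1 ≤ C 1 := (hC.2.1 1 le_rfl).1
    have h3 : w (C 1) = 3 := (hC.2.1 1 le_rfl).2
    have h4 : C 1 ≠ 1 := fun hx => by rw [hx, hw1] at h3; omega
    have h5 : C 1 ≠ 2 := fun hx => by rw [hx, hw2] at h3; omega
    omega
  have hBA : ∀ m, 1 ≤ m → B m = A m + 1 := by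
    intro m
    induction m using Nat.strong_induction_on with
    | _ m ih =>
      intro hm
      obtain ⟨hAp, hAv⟩ := hA.2.1 m hm
      have h2 : w (A m + 1) = 2 := rule1 hw hAp hAv
      obtain ⟨k, hk1, hk⟩ := hB.2.2 (A m + 1) (by omega) h2
      rcases lt_trichotomy k m with hlt | rfl | hgt
      · have h3 := ih k hlt hk1
        have h4 := hA.1 k m hk1 hlt
        omega
      · omega
      · exfalso
        have h1 : B m < A m + 1 := by have := hB.1 m k hm hgt; omega
        obtain ⟨hBp, hBv⟩ := hB.2.1 m hm
        obtain ⟨h2', hprev⟩ := rule2 hw hBp hBv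
        obtain ⟨j, hj1, hj⟩ := hA.2.2 (B m - 1) (by omega) hprev
        have hjm : j < m := by
          have := hA.lt_of_lt hj1 hm (by omega : A j < A m)
          omega
        have h5 := ih j hjm hj1
        have h6 := hB.1 j m hj1 hjm
        omega
  have hgap : ∀ m, 2 ≤ m → A m = A (m-1) + 2 ∨ A m = A (m-1) + 3 := by
    intro m hm
    obtain ⟨m', rfl⟩ : ∃ m', m = m' + 1 := ⟨m-1, by omega⟩
    simp only [Nat.add_sub_cancel]
    have hm'1 : 1 ≤ m' := by omega
    obtain ⟨hp1, hpv⟩ := hA.2.1 m' hm'1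
    have h2 : w (A m' + 1) = 2 := rule1 hw hp1 hpv
    have hmono := hA.1 m' (m'+1) hm'1 (by omega)
    have hv := (hA.2.1 (m'+1) (by omega)).2
    have hne1 : A (m'+1) ≠ A m' + 1 := fun hx => by rw [hx, h2] at hv; omega
    rcases w_mem hw (show 1 ≤ A m' + 2 by omega) with h1 | h1 | h1
    · left
      by_contra hne
      have hlt : A m' + 2 < A (m'+1) := by omega
      exact hA.between hm'1 (by omega) hlt h1
    · exfalso
      have h3 := (rule2 hw (by omega) h1).2
      simp only [show A m' + 2 - 1 = A m' + 1 by omega] at h3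
      omega
    · right
      have h3 : w (A m' + 3) = 1 := rule3 hw (by omega) h1
      have hne2 : A (m'+1) ≠ A m' + 2 := fun hx => by rw [hx, h1] at hv; omega
      by_contra hne
      have hlt : A m' + 3 < A (m'+1) := by omega
      exact hA.between hm'1 (by omega) hlt h3
  have hB2 : ∀ m, 1 ≤ m → 2 ≤ B m := by
    intro m hm
    obtain ⟨h1, h2⟩ := hB.2.1 m hm
    exact (rule2 hw h1 h2).1
  have hcntB : ∀ m, 1 ≤ m → wcnt w (B m) = m := by
    intro m hm
    induction m, hm using Nat.le_induction with
    | base =>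
      rw [hB1]
      have e2 : wcnt w 2 = wcnt w 1 + 1 := by
        rw [show (2:ℕ) = 1 + 1 from rfl, wcnt_succ, hw2]; simp
      have e1 : wcnt w 1 = 0 := by
        rw [show (1:ℕ) = 0 + 1 from rfl, wcnt_succ, hw1]; simp [wcnt]
      omega
    | succ m hm ih =>
      have hmono := hB.1 m (m+1) hm (by omega)
      have hBv := (hB.2.1 (m+1) (by omega)).2
      have h2 := hB2 (m+1) (by omega)
      have e1 : wcnt w (B (m+1)) = wcnt w (B (m+1) - 1) + 1 := by
        rw [show B (m+1) = (B (m+1) - 1) + 1 by omega, wcnt_succ]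
        rw [show B (m+1) - 1 + 1 = B (m+1) by omega, if_pos hBv]
      have e2 : wcnt w (B (m+1) - 1) = wcnt w (B m) := by
        apply wcnt_const (by omega)
        intro i hi1 hi2 hiv
        exact hB.between hm hi1 (by omega) hiv
      omega
  have hD : EnumOcc w 3 (fun m => wsig w (B m)) := by
    refine ⟨?_, ?_, ?_⟩
    · intro m n hm hmn
      show wsig w (B m) < wsig w (B n)
      exact wsig_lt (hB.1 m n hm hmn)
    · intro m hm
      show 1 ≤ wsig w (B m) ∧ w (wsig w (B m)) = 3
      have h2 := hB2 m hm
      have hBv := (hB.2.1 m hm).2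
      have hfp := (fp hw (B m - 1)).1 (by rw [show B m - 1 + 1 = B m by omega]; exact hBv)
      have hs : wsig w (B m) = wsig w (B m - 1) + 1 := by
        rw [show B m = (B m - 1) + 1 by omega, wsig_succ]
        rw [show B m - 1 + 1 = B m by omega, if_pos hBv]
      constructor
      · have := le_wsig (w := w) (B m); omega
      · rw [hs]; exact hfp
    · intro i hi hv
      obtain ⟨n, hn2, hni⟩ := rule3' hw hi hv
      obtain ⟨j, hj1, hj⟩ := hB.2.2 (n+1) (by omega) hn2
      exact ⟨j, hj1, by show wsig w (B j) = i; rw [hj, ← hni]⟩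
  have hCD : ∀ m, 1 ≤ m → C m = wsig w (B m) := EnumOcc.unique hC hD
  have hCform : ∀ m, 1 ≤ m → C m + m = 2 * B m := by
    intro m hm
    have h1 := wsig_add_wcnt (w := w) (B m)
    have h2 := hcntB m hm
    have h3 := hCD m hm
    omega
  refine ⟨hA1, hB1, hC1, hBA, ?_, ?_⟩
  · intro m hm
    have h1 := hCform m (by omega)
    have h2 := hCform (m-1) (by omega)
    have h3 := hBA m (by omega)
    have h4 := hBA (m-1) (by omega)
    have h5 := hgap m hm
    constructor <;> intro hx <;> omega
  · intro m hm
    have hm1 : 1 ≤ m := by omega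
    have hmem : A m ∈ {x : ℕ | 1 ≤ x ∧
        ∀ i, 1 ≤ i → i < m → x ≠ A i ∧ x ≠ B i ∧ x ≠ C i} := by
      refine ⟨(hA.2.1 m hm1).1, ?_⟩
      intro i hi him
      have hAv := (hA.2.1 m hm1).2
      refine ⟨?_, ?_, ?_⟩
      · have := hA.1 i m hi him; omega
      · intro hx
        have := (hB.2.1 i hi).2
        rw [← hx, hAv] at this; omega
      · intro hx
        have := (hC.2.1 i hi).2
        rw [← hx, hAv] at this; omega
    have hlb : ∀ x, x ∈ {x : ℕ | 1 ≤ x ∧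
        ∀ i, 1 ≤ i → i < m → x ≠ A i ∧ x ≠ B i ∧ x ≠ C i} → A m ≤ x := by
      rintro x ⟨hx1, hxp⟩
      by_contra hc
      push_neg at hc
      rcases w_mem hw hx1 with h1 | h1 | h1
      · obtain ⟨j, hj1, hj⟩ := hA.2.2 x hx1 h1
        have hjm : j < m := hA.lt_of_lt hj1 hm1 (by omega)
        exact (hxp j hj1 hjm).1 hj.symm
      · obtain ⟨j, hj1, hj⟩ := hB.2.2 x hx1 h1
        have hb := hBA j hj1
        have hjm : j < m := hA.lt_of_lt hj1 hm1 (by omega)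
        exact (hxp j hj1 hjm).2.1 hj.symm
      · obtain ⟨j, hj1, hj⟩ := hC.2.2 x hx1 h1
        have hcf := hCform j hj1
        have hb := hBA j hj1
        have hsj := hA.self_le hj1
        have hjm : j < m := by
          by_contra hjm
          have := hA.le_mono hm1 (by omega : m ≤ j)
          omega
        exact (hxp j hj1 hjm).2.2 hj.symm
    exact le_antisymm
      (hlb _ (Nat.sInf_mem ⟨A m, hmem⟩))
      (Nat.sInf_le hmem)
end

section
/- For the Fibonacci numeration system F₀ = 1, F₁ = 2, F_{i+2} = F_{i+1} + F_i, a pair (a, b) with a < b is a P-position of Wythoff's game (i.e., (a,b) = (⌊mφ⌋, ⌊mφ²⌋) for some m ≥ 1) if and only if the Zeckendorf expansion of a ends in an even number (possibly zero) of zero digits and the Zeckendorf expansion of b is obtained from that of a by appending a zero digit (equivalently, if a = Σ c_j F_j is the greedy expansion then b = Σ c_j F_{j+1}). -/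
private lemma fib3 (j : ℕ) : Nat.fib (j + 3) = Nat.fib (j + 1) + Nat.fib (j + 2) :=
  Nat.fib_add_two

private lemma fib4 (j : ℕ) : Nat.fib (j + 4) = Nat.fib (j + 2) + Nat.fib (j + 3) :=
  Nat.fib_add_two

private lemma fib_ge (n : ℕ) : n ≤ Nat.fib (n + 1) := by
  have := Nat.le_fib_add_one (n + 1)
  omega

private lemma sum_fib_odd (t : ℕ) :
    ∑ s ∈ Finset.range t, Nat.fib (2 * s + 1) = Nat.fib (2 * t) := by
  induction t with
  | zero => simp
  | succ t ih =>
    rw [Finset.sum_range_succ, ih, show 2 * (t + 1) = 2 * t + 2 by ring,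
      Nat.fib_add_two]

private lemma delta_bounds (x : ℝ) (hx0 : 0 < x) (hx1 : x < 1) (hx : x * x = 1 - x) :
    ∀ n : ℕ, ∀ S : Finset ℕ, S.card ≤ n → ∀ j₀ ∈ S, (∀ j ∈ S, j₀ ≤ j) →
    (∀ j ∈ S, j + 1 ∉ S) →
    x ^ (j₀ + 2) < (-1 : ℝ) ^ j₀ * ∑ j ∈ S, (-1 : ℝ) ^ j * x ^ (j + 1) ∧
    (-1 : ℝ) ^ j₀ * ∑ j ∈ S, (-1 : ℝ) ^ j * x ^ (j + 1) < x ^ j₀ := by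
  intro n
  induction n with
  | zero =>
    intro S hcard j₀ hj₀ _ _
    exact absurd (Finset.card_pos.mpr ⟨j₀, hj₀⟩) (by omega)
  | succ n ih =>
    intro S hcard j₀ hj₀ hmin hnc
    have hsplit : ∑ j ∈ S, (-1 : ℝ) ^ j * x ^ (j + 1)
        = (-1 : ℝ) ^ j₀ * x ^ (j₀ + 1) + ∑ j ∈ S.erase j₀, (-1 : ℝ) ^ j * x ^ (j + 1) :=
      (Finset.add_sum_erase S _ hj₀).symm
    have hsq : ((-1 : ℝ) ^ j₀) * ((-1 : ℝ) ^ j₀) = 1 := by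
      rw [← pow_add]
      exact Even.neg_one_pow ⟨j₀, rfl⟩
    by_cases hT : S.erase j₀ = ∅
    · rw [hsplit, hT, Finset.sum_empty, add_zero, ← mul_assoc, hsq, one_mul]
      constructor
      · exact pow_lt_pow_right_of_lt_one₀ hx0 hx1 (by omega)
      · exact pow_lt_pow_right_of_lt_one₀ hx0 hx1 (by omega)
    · have hTne : (S.erase j₀).Nonempty := Finset.nonempty_of_ne_empty hT
      set j₁ := (S.erase j₀).min' hTne with hj₁def
      have hj₁T : j₁ ∈ S.erase j₀ := Finset.min'_mem _ _
      have hj₁S : j₁ ∈ S := Finset.mem_of_mem_erase hj₁T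
      have hj₁ne : j₁ ≠ j₀ := Finset.ne_of_mem_erase hj₁T
      have hj₁ne' : j₁ ≠ j₀ + 1 := by
        intro h
        exact hnc j₀ hj₀ (h ▸ hj₁S)
      have hj₁ge : j₀ + 2 ≤ j₁ := by
        have := hmin j₁ hj₁S
        omega
      have hcard' : (S.erase j₀).card ≤ n := by
        have := Finset.card_erase_of_mem hj₀
        have := Finset.card_pos.mpr ⟨j₀, hj₀⟩
        omega
      have hmin' : ∀ j ∈ S.erase j₀, j₁ ≤ j := fun j hj => Finset.min'_le _ _ hj
      have hnc' : ∀ j ∈ S.erase j₀, j + 1 ∉ S.erase j₀ := fun j hj h =>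
        hnc j (Finset.mem_of_mem_erase hj) (Finset.mem_of_mem_erase h)
      obtain ⟨hlo, hhi⟩ := ih (S.erase j₀) hcard' j₁ hj₁T hmin' hnc'
      set B := ∑ j ∈ S.erase j₀, (-1 : ℝ) ^ j * x ^ (j + 1) with hBdef
      rw [hsplit, mul_add, ← mul_assoc, hsq, one_mul]
      have hBpos : (0 : ℝ) < (-1 : ℝ) ^ j₁ * B := lt_trans (pow_pos hx0 _) hlo
      obtain ⟨d, hd, hd2⟩ : ∃ d, j₁ = j₀ + d ∧ 2 ≤ d := ⟨j₁ - j₀, by omega, by omega⟩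
      have he : (-1 : ℝ) ^ j₁ = (-1 : ℝ) ^ j₀ * (-1 : ℝ) ^ d := by rw [hd, pow_add]
      have hstep : x ^ (j₀ + 2) < x ^ (j₀ + 1) := pow_lt_pow_right_of_lt_one₀ hx0 hx1 (by omega)
      rcases Nat.even_or_odd d with hde | hdo
      · -- same parity
        have hB : (-1 : ℝ) ^ j₀ * B = (-1 : ℝ) ^ j₁ * B := by
          rw [he, hde.neg_one_pow]; ring
        have h1 : x ^ j₁ ≤ x ^ (j₀ + 2) :=
          pow_le_pow_of_le_one hx0.le hx1.le (by omega)
        have hid : x ^ (j₀ + 1) + x ^ (j₀ + 2) = x ^ j₀ := by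
          linear_combination (x ^ j₀) * hx
        constructor
        · rw [hB]; linarith
        · rw [hB]; linarith
      · -- opposite parity
        have hd3 : 3 ≤ d := by
          obtain ⟨c, hc⟩ := hdo; omega
        have hB : (-1 : ℝ) ^ j₀ * B = -((-1 : ℝ) ^ j₁ * B) := by
          rw [he, hdo.neg_one_pow]; ring
        have h1 : x ^ j₁ ≤ x ^ (j₀ + 3) :=
          pow_le_pow_of_le_one hx0.le hx1.le (by omega)
        have hid : x ^ (j₀ + 1) - x ^ (j₀ + 3) = x ^ (j₀ + 2) := by
          linear_combination (-(x ^ (j₀ + 1))) * hx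
        constructor
        · rw [hB]; linarith
        · rw [hB]
          have : x ^ (j₀ + 1) < x ^ j₀ := pow_lt_pow_right_of_lt_one₀ hx0 hx1 (by omega)
          linarith

private lemma fib_phi (φ : ℝ) (hφ2 : φ ^ 2 = φ + 1) :
    ∀ n : ℕ, φ * Nat.fib n + (1 - φ) ^ n = Nat.fib (n + 1) := by
  have hψ : (1 - φ) * (1 - φ) = 2 - φ := by linear_combination hφ2
  intro n
  induction n using Nat.twoStepInduction with
  | zero => simp
  | one => simp
  | more n ih1 ih2 =>
    have e2 : (Nat.fib (n + 2) : ℝ) = Nat.fib n + Nat.fib (n + 1) := by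
      rw [Nat.fib_add_two]; push_cast; ring
    have e3 : (Nat.fib (n + 3) : ℝ) = Nat.fib (n + 1) + Nat.fib (n + 2) := by
      rw [show n + 3 = (n + 1) + 2 by ring, Nat.fib_add_two]; push_cast; ring
    rw [show n + 1 + 1 = n + 2 from rfl] at ih2
    rw [show n + 2 + 1 = n + 3 from rfl]
    linear_combination ih1 + ih2 + (1 - φ) ^ n * hψ + φ * e2 - e3

private lemma key_floor (φ : ℝ) (hφ : φ = (1 + Real.sqrt 5) / 2)
    (S : Finset ℕ) (hnc : ∀ j ∈ S, j + 1 ∉ S)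
    (j₀ : ℕ) (hj₀ : j₀ ∈ S) (he : Even j₀) (hmin : ∀ j ∈ S, j₀ ≤ j) :
    ⌊((∑ j ∈ S, Nat.fib (j + 1) : ℕ) : ℝ) * φ⌋ = ((∑ j ∈ S, Nat.fib (j + 2) : ℕ) : ℤ) := by
  have h5 : Real.sqrt 5 ^ 2 = 5 := Real.sq_sqrt (by norm_num)
  have hs0 : 0 ≤ Real.sqrt 5 := Real.sqrt_nonneg 5
  have hsgt : 2 < Real.sqrt 5 := by nlinarith
  have hslt : Real.sqrt 5 < 3 := by nlinarith
  have hφ2 : φ ^ 2 = φ + 1 := by rw [hφ]; linear_combination h5 / 4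
  have hφ1 : 1 < φ := by rw [hφ]; linarith
  have hφlt : φ < 2 := by rw [hφ]; linarith
  set x := φ - 1 with hxdef
  have hx0 : 0 < x := by rw [hxdef]; linarith
  have hx1 : x < 1 := by rw [hxdef]; linarith
  have hx : x * x = 1 - x := by rw [hxdef]; linear_combination hφ2
  have h1φ : 1 - φ = -x := by rw [hxdef]; ring
  have hsum : ((∑ j ∈ S, Nat.fib (j + 1) : ℕ) : ℝ) * φ
      = ((∑ j ∈ S, Nat.fib (j + 2) : ℕ) : ℝ) + ∑ j ∈ S, (-1 : ℝ) ^ j * x ^ (j + 1) := by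
    push_cast
    rw [Finset.sum_mul, ← Finset.sum_add_distrib]
    apply Finset.sum_congr rfl
    intro j _
    have hf := fib_phi φ hφ2 (j + 1)
    have hxj : (1 - φ) ^ (j + 1) = -((-1 : ℝ) ^ j * x ^ (j + 1)) := by
      rw [h1φ, neg_pow, pow_succ]; ring
    rw [show j + 1 + 1 = j + 2 by ring] at hf
    linear_combination hf - hxj
  obtain ⟨hlo, hhi⟩ := delta_bounds x hx0 hx1 hx S.card S le_rfl j₀ hj₀ hmin hnc
  rw [he.neg_one_pow, one_mul] at hlo hhi
  have hp2 : (0 : ℝ) < x ^ (j₀ + 2) := pow_pos hx0 _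
  have hp0 : x ^ j₀ ≤ 1 := pow_le_one₀ hx0.le hx1.le
  rw [Int.floor_eq_iff]
  constructor
  · rw [hsum]
    push_cast
    linarith
  · rw [hsum]
    push_cast
    linarith

private lemma zeck (m : ℕ) (hm : 1 ≤ m) :
    ∃ S : Finset ℕ, (∀ j ∈ S, j + 1 ∉ S) ∧
      (∃ j₀ ∈ S, Even j₀ ∧ ∀ j ∈ S, j₀ ≤ j) ∧
      m = ∑ j ∈ S, Nat.fib (j + 1) ∧ ∀ j ∈ S, Nat.fib (j + 1) ≤ m := by
  induction m using Nat.strong_induction_on with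
  | _ m ih =>
  set k := Nat.findGreatest (fun k => Nat.fib (k + 1) ≤ m) m with hkdef
  have hk1 : Nat.fib (k + 1) ≤ m := by
    rw [hkdef]
    exact Nat.findGreatest_spec (P := fun k => Nat.fib (k + 1) ≤ m) (Nat.zero_le m)
      (by simpa using hm)
  have hk2 : m < Nat.fib (k + 2) := by
    by_contra h
    push_neg at h
    have hkm : k + 1 ≤ m := le_trans (le_trans (fib_ge (k + 1)) h) (le_refl m)
    exact Nat.findGreatest_is_greatest (lt_add_one k) hkm h
  have hfk1pos : 1 ≤ Nat.fib (k + 1) := Nat.fib_pos.mpr (by omega)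
  rcases Nat.eq_or_lt_of_le hk1 with heq | hlt'
  · -- m = fib (k+1)
    rcases Nat.even_or_odd k with hke | hko
    · refine ⟨{k}, ?_, ⟨k, by simp, hke, by simp⟩, by simp [heq], by simp [hk1]⟩
      intro j hj
      simp only [Finset.mem_singleton] at hj ⊢
      omega
    · obtain ⟨t, ht⟩ := hko
      refine ⟨(Finset.range (t + 1)).image (2 * ·), ?_, ⟨0, ?_, Even.zero, fun j _ => Nat.zero_le j⟩, ?_, ?_⟩
      · intro j hj hj1
        simp only [Finset.mem_image, Finset.mem_range] at hj hj1
        obtain ⟨s, _, hs⟩ := hj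
        obtain ⟨s', _, hs'⟩ := hj1
        omega
      · simp only [Finset.mem_image, Finset.mem_range]
        exact ⟨0, by omega, by ring⟩
      · rw [Finset.sum_image (by intro a _ b _ h; simp only at h; omega)]
        have := sum_fib_odd (t + 1)
        rw [show 2 * (t + 1) = k + 1 by omega] at this
        rw [← heq]
        exact (by simpa using this.symm)
      · intro j hj
        simp only [Finset.mem_image, Finset.mem_range] at hj
        obtain ⟨s, hs, rfl⟩ := hj
        calc Nat.fib (2 * s + 1) ≤ Nat.fib (k + 1) := Nat.fib_mono (by omega)
          _ ≤ m := hk1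
  · -- m > fib (k+1)
    set m' := m - Nat.fib (k + 1) with hm'def
    have hm'1 : 1 ≤ m' := by omega
    have hm'lt : m' < m := by omega
    obtain ⟨S', hnc', ⟨j₀, hj₀, hev, hmin'⟩, hsum', hbd'⟩ := ih m' hm'lt hm'1
    have hm'fib : m' < Nat.fib k := by
      have := Nat.fib_add_two (n := k)
      omega
    have hlt : ∀ j ∈ S', j + 2 ≤ k := by
      intro j hj
      by_contra h
      push_neg at h
      have : Nat.fib k ≤ Nat.fib (j + 1) := Nat.fib_mono (by omega)
      have := hbd' j hj
      omega
    have hknotin : k ∉ S' := fun h => by have := hlt k h; omega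
    refine ⟨insert k S', ?_, ⟨j₀, Finset.mem_insert_of_mem hj₀, hev, ?_⟩, ?_, ?_⟩
    · intro j hj
      rcases Finset.mem_insert.mp hj with rfl | hj'
      · intro h
        rcases Finset.mem_insert.mp h with h' | h'
        · omega
        · have := hlt _ h'; omega
      · intro h
        rcases Finset.mem_insert.mp h with h' | h'
        · have := hlt j hj'; omega
        · exact hnc' j hj' h'
    · intro j hj
      rcases Finset.mem_insert.mp hj with rfl | hj'
      · have := hlt j₀ hj₀; omega
      · exact hmin' j hj'
    · rw [Finset.sum_insert hknotin, ← hsum']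
      omega
    · intro j hj
      rcases Finset.mem_insert.mp hj with rfl | hj'
      · exact hk1
      · exact le_trans (hbd' j hj') (by omega)

/-- Zeckendorf characterization of the P-positions of Wythoff's game: a pair
(a, b) with a < b is of the form (⌊mφ⌋, ⌊mφ²⌋) for some m ≥ 1 iff the
Zeckendorf expansion of `a` ends in an even number of zeros (its least used
index is even) and the expansion of `b` is that of `a` shifted by one index. -/
theorem wythoff_zeckendorf_characterization
    (F : ℕ → ℕ) (h0 : F 0 = 1) (h1 : F 1 = 2)
    (hrec : ∀ i, F (i + 2) = F (i + 1) + F i)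
    (φ : ℝ) (hφ : φ = (1 + Real.sqrt 5) / 2)
    (a b : ℕ) (hab : a < b) :
    (∃ m : ℕ, 1 ≤ m ∧ (a : ℤ) = ⌊(m : ℝ) * φ⌋ ∧ (b : ℤ) = ⌊(m : ℝ) * φ ^ 2⌋) ↔
    (∃ S : Finset ℕ, (∀ j ∈ S, j + 1 ∉ S) ∧
      (∃ j₀ ∈ S, Even j₀ ∧ ∀ j ∈ S, j₀ ≤ j) ∧
      a = ∑ j ∈ S, F j ∧ b = ∑ j ∈ S, F (j + 1)) := by
  have hF : ∀ n, F n = Nat.fib (n + 2) := by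
    intro n
    induction n using Nat.twoStepInduction with
    | zero => simpa using h0
    | one =>
      have h3 : Nat.fib 3 = 2 := rfl
      simpa [h3] using h1
    | more n ih1 ih2 =>
      rw [hrec n, ih1, ih2]
      show Nat.fib (n + 3) + Nat.fib (n + 2) = Nat.fib (n + 4)
      have := fib4 n
      omega
  have h5 : Real.sqrt 5 ^ 2 = 5 := Real.sq_sqrt (by norm_num)
  have hφ2 : φ ^ 2 = φ + 1 := by rw [hφ]; linear_combination h5 / 4
  have hphisq : ∀ m : ℕ, ⌊(m : ℝ) * φ ^ 2⌋ = ⌊(m : ℝ) * φ⌋ + (m : ℤ) := by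
    intro m
    have : (m : ℝ) * φ ^ 2 = (m : ℝ) * φ + (m : ℤ) := by
      push_cast
      linear_combination (m : ℝ) * hφ2
    rw [this, Int.floor_add_intCast]
  constructor
  · rintro ⟨m, hm1, ha, hb⟩
    obtain ⟨S, hnc, ⟨j₀, hj₀, hev, hmin⟩, hsum, _⟩ := zeck m hm1
    have hfloor := key_floor φ hφ S hnc j₀ hj₀ hev hmin
    rw [← hsum] at hfloor
    have haN : a = ∑ j ∈ S, Nat.fib (j + 2) := by
      have : (a : ℤ) = ((∑ j ∈ S, Nat.fib (j + 2) : ℕ) : ℤ) := ha.trans hfloor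
      exact_mod_cast this
    have hbN : b = ∑ j ∈ S, Nat.fib (j + 3) := by
      have hbz : (b : ℤ) = ((∑ j ∈ S, Nat.fib (j + 2) : ℕ) : ℤ) + (m : ℤ) := by
        rw [hb, hphisq m, hfloor]
      have : b = (∑ j ∈ S, Nat.fib (j + 2)) + m := by exact_mod_cast hbz
      rw [this, hsum, ← Finset.sum_add_distrib]
      refine Finset.sum_congr rfl fun j _ => ?_
      have := fib3 j
      omega
    refine ⟨S, hnc, ⟨j₀, hj₀, hev, hmin⟩, ?_, ?_⟩
    · rw [haN]; exact Finset.sum_congr rfl fun j _ => by rw [hF j]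
    · rw [hbN]; exact Finset.sum_congr rfl fun j _ => by rw [hF (j + 1)]
  · rintro ⟨S, hnc, ⟨j₀, hj₀, hev, hmin⟩, ha, hb⟩
    refine ⟨∑ j ∈ S, Nat.fib (j + 1), ?_, ?_, ?_⟩
    · calc 1 ≤ Nat.fib (j₀ + 1) := Nat.fib_pos.mpr (by omega)
        _ ≤ ∑ j ∈ S, Nat.fib (j + 1) :=
          Finset.single_le_sum (f := fun j => Nat.fib (j + 1)) (fun j _ => Nat.zero_le _) hj₀
    · rw [key_floor φ hφ S hnc j₀ hj₀ hev hmin, ha]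
      push_cast
      exact_mod_cast Finset.sum_congr rfl fun j (_ : j ∈ S) => by rw [hF j]
    · rw [hphisq, key_floor φ hφ S hnc j₀ hj₀ hev hmin, hb]
      have hN : ∑ j ∈ S, F (j + 1) = (∑ j ∈ S, Nat.fib (j + 2)) + ∑ j ∈ S, Nat.fib (j + 1) := by
        rw [← Finset.sum_add_distrib]
        refine Finset.sum_congr rfl fun j _ => ?_
        rw [hF (j + 1), show j + 1 + 2 = j + 3 from rfl]
        have := fib3 j
        omega
      rw [hN]
      push_cast
      ring
end
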